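/- arXiv:2103.06975 — 6 statements merged into one kernel-verified Lean document; each statement's English description precedes it below -/
import Mathlib

section
/- Let g be a nonzero homogeneous polynomial of positive degree in C[z_1,...,z_n] and let f be a nonzero homogeneous polynomial of positive degree satisfying (deg g)·g·(∂f/∂z_l) = (deg f)·f·(∂g/∂z_l) for all l ∈ {1,...,n}. Then every prime factor of g divides f, and every prime factor of f divides g. -/
open MvPolynomial

namespace Stmt0Aux

open Finsupp

variable {σ : Type*}

lemma sum_eq_degree (m : σ →₀ ℕ) : (m.sum fun _ e => e) = m.degree := by
  simp [Finsupp.degree_apply, Finsupp.sum]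

lemma degree_le_totalDegree {q : MvPolynomial σ ℂ} {m : σ →₀ ℕ} (h : m ∈ q.support) :
    m.degree ≤ q.totalDegree := by
  simpa [sum_eq_degree] using MvPolynomial.le_totalDegree h

lemma homComp_td_ne_zero {q : MvPolynomial σ ℂ} (hq : q ≠ 0) :
    homogeneousComponent q.totalDegree q ≠ 0 := by
  obtain ⟨m, hm, hdeg⟩ := Finset.exists_mem_eq_sup q.support (support_nonempty.mpr hq)
    (fun m => m.sum fun _ e => e)
  intro h0
  have hc : coeff m (homogeneousComponent q.totalDegree q) = coeff m q := by
    rw [coeff_homogeneousComponent, if_pos]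
    rw [← sum_eq_degree, MvPolynomial.totalDegree, hdeg]
  rw [h0] at hc
  exact MvPolynomial.mem_support_iff.mp hm hc.symm

lemma compl_td_lt {q : MvPolynomial σ ℂ}
    (hq' : q - homogeneousComponent q.totalDegree q ≠ 0) :
    (q - homogeneousComponent q.totalDegree q).totalDegree < q.totalDegree := by
  set Q := homogeneousComponent q.totalDegree q with hQ
  have hmem : ∀ m ∈ (q - Q).support, (m.sum fun _ e => e) < q.totalDegree := by
    intro m hm
    have hc : coeff m (q - Q) ≠ 0 := MvPolynomial.mem_support_iff.mp hm
    rw [coeff_sub, hQ, coeff_homogeneousComponent] at hc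
    by_cases hd : m.degree = q.totalDegree
    · simp [hd] at hc
    · rw [if_neg hd, sub_zero] at hc
      have hle : m.degree ≤ q.totalDegree := degree_le_totalDegree (MvPolynomial.mem_support_iff.2 hc)
      rw [sum_eq_degree]
      exact lt_of_le_of_ne hle hd
  rw [MvPolynomial.totalDegree]
  refine (Finset.sup_lt_iff ?_).2 hmem
  obtain ⟨m, hm⟩ := support_nonempty.mpr hq'
  exact lt_of_le_of_lt (Nat.zero_le _) (hmem m hm)

lemma le_totalDegree_mul {u v : MvPolynomial σ ℂ} (hu : u ≠ 0) (hv : v ≠ 0) :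
    u.totalDegree + v.totalDegree ≤ (u * v).totalDegree := by
  classical
  set a := u.totalDegree with ha
  set b := v.totalDegree with hb
  set U := homogeneousComponent a u with hU
  set V := homogeneousComponent b v with hV
  have hU0 : U ≠ 0 := homComp_td_ne_zero hu
  have hV0 : V ≠ 0 := homComp_td_ne_zero hv
  have hkey : u * v = U * V + ((u - U) * v + U * (v - V)) := by ring
  have h1 : homogeneousComponent (a + b) ((u - U) * v) = 0 := by
    by_cases h : u - U = 0
    · simp [h]
    · apply homogeneousComponent_eq_zero
      calc ((u - U) * v).totalDegree ≤ (u - U).totalDegree + b := totalDegree_mul _ _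
        _ < a + b := by have h3 : (u - U).totalDegree < a := compl_td_lt h; omega
  have h2 : homogeneousComponent (a + b) (U * (v - V)) = 0 := by
    by_cases h : v - V = 0
    · simp [h]
    · apply homogeneousComponent_eq_zero
      have hUa : U.totalDegree ≤ a := (homogeneousComponent_isHomogeneous a u).totalDegree_le
      calc (U * (v - V)).totalDegree ≤ U.totalDegree + (v - V).totalDegree := totalDegree_mul _ _
        _ < a + b := by have h3 : (v - V).totalDegree < b := compl_td_lt h; omega
  have hhom : U * V ∈ homogeneousSubmodule σ ℂ (a + b) := by
    rw [mem_homogeneousSubmodule]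
    exact (homogeneousComponent_isHomogeneous a u).mul (homogeneousComponent_isHomogeneous b v)
  have hUV : homogeneousComponent (a + b) (u * v) = U * V := by
    rw [hkey, map_add, map_add, h1, h2, add_zero, add_zero,
      homogeneousComponent_of_mem hhom, if_pos rfl]
  by_contra hlt
  push_neg at hlt
  exact mul_ne_zero hU0 hV0 (hUV ▸ homogeneousComponent_eq_zero _ _ hlt)

lemma degree_sub_single {m : σ →₀ ℕ} {i : σ} (hmi : m i ≠ 0) :
    (m - Finsupp.single i 1).degree + 1 = m.degree := by
  classical
  have hle : Finsupp.single i 1 ≤ m := Finsupp.single_le_iff.2 (Nat.one_le_iff_ne_zero.2 hmi)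
  have hadd : (m - Finsupp.single i 1) + Finsupp.single i 1 = m := tsub_add_cancel_of_le hle
  have h1 : (Finsupp.single i 1 : σ →₀ ℕ).degree = 1 := by
    simp [Finsupp.degree_apply, Finsupp.support_single_ne_zero _ one_ne_zero]
  calc (m - Finsupp.single i 1).degree + 1
      = (m - Finsupp.single i 1).degree + (Finsupp.single i 1 : σ →₀ ℕ).degree := by rw [h1]
    _ = ((m - Finsupp.single i 1) + Finsupp.single i 1).degree := by
        simp only [Finsupp.degree_eq_weight_one, map_add]
    _ = m.degree := by rw [hadd]

lemma pderiv_as_sum [DecidableEq σ] (i : σ) (q : MvPolynomial σ ℂ) :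
    pderiv i q = ∑ m ∈ q.support, monomial (m - Finsupp.single i 1) (coeff m q * (m i : ℂ)) := by
  conv_lhs => rw [q.as_sum]
  rw [map_sum]
  simp [pderiv_monomial]

lemma totalDegree_pderiv_lt [DecidableEq σ] (i : σ) {q : MvPolynomial σ ℂ}
    (h : pderiv i q ≠ 0) : (pderiv i q).totalDegree < q.totalDegree := by
  have hsum := pderiv_as_sum i q
  have htq : 1 ≤ q.totalDegree := by
    by_contra hlt
    push_neg at hlt
    have h0 : q.totalDegree = 0 := by omega
    apply h
    rw [hsum]
    apply Finset.sum_eq_zero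
    intro m hm
    have := (totalDegree_eq_zero_iff σ q).1 h0 m hm i
    simp [this]
  have hb : (pderiv i q).totalDegree ≤ q.totalDegree - 1 := by
    rw [hsum]
    apply totalDegree_finsetSum_le
    intro m hm
    by_cases hmi : m i = 0
    · simp [hmi]
    · refine (totalDegree_monomial_le _ _).trans ?_
      have h1 : ((m - Finsupp.single i 1).sum fun _ => id) = (m - Finsupp.single i 1).degree := by
        simp [Finsupp.degree_apply, Finsupp.sum]
      rw [h1]
      have h2 := degree_sub_single hmi
      have h3 : m.degree ≤ q.totalDegree := degree_le_totalDegree hm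
      omega
  omega

lemma coeff_pderiv [DecidableEq σ] (i : σ) (m : σ →₀ ℕ) (q : MvPolynomial σ ℂ) :
    coeff m (pderiv i q) = coeff (m + Finsupp.single i 1) q * ((m i : ℂ) + 1) := by
  induction q using MvPolynomial.induction_on' with
  | add p q hp hq => simp [hp, hq, add_mul]
  | monomial s a =>
    rw [pderiv_monomial, coeff_monomial, coeff_monomial]
    by_cases hs : s = m + Finsupp.single i 1
    · subst hs
      rw [if_pos (add_tsub_cancel_right _ _), if_pos rfl]
      push_cast [Finsupp.add_apply, Finsupp.single_eq_same]
      ring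
    · rw [if_neg hs, zero_mul]
      by_cases hd : s - Finsupp.single i 1 = m
      · rw [if_pos hd]
        have hsi : s i = 0 := by
          by_contra hsi
          have hle : Finsupp.single i 1 ≤ s :=
            Finsupp.single_le_iff.2 (Nat.one_le_iff_ne_zero.2 hsi)
          exact hs (by rw [← hd]; exact (tsub_add_cancel_of_le hle).symm)
        simp [hsi]
      · rw [if_neg hd]

lemma eq_C_of_pderiv_eq_zero [DecidableEq σ] {q : MvPolynomial σ ℂ}
    (h : ∀ i, pderiv i q = 0) : q = C (coeff 0 q) := by
  ext m
  rw [coeff_C]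
  by_cases hm : (0 : σ →₀ ℕ) = m
  · rw [if_pos hm, ← hm]
  · rw [if_neg hm]
    have hm' : m ≠ 0 := fun h' => hm h'.symm
    obtain ⟨i, hi⟩ : ∃ i, m i ≠ 0 := by
      by_contra hc
      push_neg at hc
      exact hm' (Finsupp.ext fun i => hc i)
    have hle : Finsupp.single i 1 ≤ m := Finsupp.single_le_iff.2 (Nat.one_le_iff_ne_zero.2 hi)
    set m' := m - Finsupp.single i 1 with hm'def
    have hc := coeff_pderiv i m' q
    rw [h i, coeff_zero, hm'def, tsub_add_cancel_of_le hle] at hc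
    have hne : ((m' i : ℕ) : ℂ) + 1 ≠ 0 := Nat.cast_add_one_ne_zero _
    exact (mul_eq_zero.1 hc.symm).resolve_right hne

end Stmt0Aux

lemma main_half {n : ℕ} (g f : MvPolynomial (Fin n) ℂ) (dg df : ℕ)
    (hg0 : g ≠ 0) (hf0 : f ≠ 0) (hdf : 0 < df)
    (heq : ∀ l : Fin n, C (dg : ℂ) * g * pderiv l f = C (df : ℂ) * f * pderiv l g)
    (p : MvPolynomial (Fin n) ℂ) (hp : Prime p) (hpg : p ∣ g) : p ∣ f := by
  by_contra hpf
  have hfin : FiniteMultiplicity p g := FiniteMultiplicity.of_prime_left hp hg0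
  obtain ⟨h, hgh, hph⟩ := hfin.exists_eq_pow_mul_and_not_dvd
  have hk0 : multiplicity p g ≠ 0 := by
    intro h0
    rw [h0, pow_zero, one_mul] at hgh
    exact hph (hgh ▸ hpg)
  obtain ⟨m, hm⟩ : ∃ m, multiplicity p g = m + 1 :=
    ⟨multiplicity p g - 1, (Nat.succ_pred_eq_of_pos (Nat.pos_of_ne_zero hk0)).symm⟩
  rw [hm] at hgh
  have hpmne : (p : MvPolynomial (Fin n) ℂ) ^ m ≠ 0 := pow_ne_zero _ hp.ne_zero
  have hdfne : ((df : ℂ)) ≠ 0 := Nat.cast_ne_zero.2 hdf.ne'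
  have hCunit : IsUnit (C (df : ℂ) : MvPolynomial (Fin n) ℂ) :=
    (isUnit_iff_ne_zero.2 hdfne).map (C : ℂ →+* MvPolynomial (Fin n) ℂ)
  have hcunit : IsUnit (((m + 1 : ℕ) : MvPolynomial (Fin n) ℂ)) := by
    rw [← map_natCast (C : ℂ →+* MvPolynomial (Fin n) ℂ) (m + 1)]
    exact (isUnit_iff_ne_zero.2 (Nat.cast_ne_zero.2 (Nat.succ_ne_zero m))).map
      (C : ℂ →+* MvPolynomial (Fin n) ℂ)
  have hpd : ∀ l : Fin n, p ∣ pderiv l p := by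
    intro l
    have e1 := heq l
    rw [hgh, pderiv_mul, pderiv_pow, Nat.add_sub_cancel] at e1
    have e2 : p ^ m * (C (dg : ℂ) * (p * h) * pderiv l f)
        = p ^ m * (C (df : ℂ) * f *
          (((m + 1 : ℕ) : MvPolynomial (Fin n) ℂ) * pderiv l p * h + p * pderiv l h)) := by
      push_cast at e1 ⊢
      linear_combination e1
    have e3 := mul_left_cancel₀ hpmne e2
    have e4 : p ∣ C (df : ℂ) * f * (((m + 1 : ℕ) : MvPolynomial (Fin n) ℂ) * pderiv l p * h) := by
      refine ⟨C (dg : ℂ) * h * pderiv l f - C (df : ℂ) * f * pderiv l h, ?_⟩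
      linear_combination -e3
    rcases hp.dvd_mul.1 e4 with h1 | h1
    · rcases hp.dvd_mul.1 h1 with h2 | h2
      · exact absurd (isUnit_of_dvd_unit h2 hCunit) hp.not_unit
      · exact absurd h2 hpf
    · rcases hp.dvd_mul.1 h1 with h2 | h2
      · rcases hp.dvd_mul.1 h2 with h3 | h3
        · exact absurd (isUnit_of_dvd_unit h3 hcunit) hp.not_unit
        · exact h3
      · exact absurd h2 hph
  have hz : ∀ l, pderiv l p = 0 := by
    intro l
    by_contra hne
    obtain ⟨u, hu⟩ := hpd l
    have hu0 : u ≠ 0 := by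
      rintro rfl
      rw [mul_zero] at hu
      exact hne hu
    have h1 : p.totalDegree + u.totalDegree ≤ (pderiv l p).totalDegree :=
      hu ▸ Stmt0Aux.le_totalDegree_mul hp.ne_zero hu0
    have h2 : (pderiv l p).totalDegree < p.totalDegree := Stmt0Aux.totalDegree_pderiv_lt l hne
    omega
  have hpc := Stmt0Aux.eq_C_of_pderiv_eq_zero hz
  apply hp.not_unit
  rw [hpc]
  refine (isUnit_iff_ne_zero.2 ?_).map (C : ℂ →+* MvPolynomial (Fin n) ℂ)
  intro h0
  apply hp.ne_zero
  rw [hpc, h0, map_zero]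

/-- If `g`, `f` are nonzero homogeneous polynomials of positive degree in
`ℂ[z_1,…,z_n]` with `(deg g)·g·∂f/∂z_l = (deg f)·f·∂g/∂z_l` for all `l`, then every prime
factor of `g` divides `f` and every prime factor of `f` divides `g`. -/
theorem stmt0 {n : ℕ} (g f : MvPolynomial (Fin n) ℂ) (dg df : ℕ)
    (hg0 : g ≠ 0) (hgh : g.IsHomogeneous dg) (hdg : 0 < dg)
    (hf0 : f ≠ 0) (hfh : f.IsHomogeneous df) (hdf : 0 < df)
    (heq : ∀ l : Fin n, C (dg : ℂ) * g * pderiv l f = C (df : ℂ) * f * pderiv l g) :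
    (∀ p : MvPolynomial (Fin n) ℂ, Prime p → p ∣ g → p ∣ f) ∧
    (∀ p : MvPolynomial (Fin n) ℂ, Prime p → p ∣ f → p ∣ g) := by
  exact ⟨fun p hp hpg => main_half g f dg df hg0 hf0 hdf heq p hp hpg,
    fun p hp hpf => main_half f g df dg hf0 hg0 hdg (fun l => (heq l).symm) p hp hpf⟩
end

section
/- Let g = u·p_1^{α_1}···p_m^{α_m} and f = v·p_1^{β_1}···p_m^{β_m} be nonzero homogeneous polynomials of positive degree in C[z_1,...,z_n], where u,v are nonzero constants, p_1,...,p_m are pairwise non-associate primes, and α_j, β_j are positive integers. If (deg g)·g·(∂f/∂z_l) = (deg f)·f·(∂g/∂z_l) for all l ∈ {1,...,n}, then β_j/α_j = (deg f)/(deg g) for all j ∈ {1,...,m}. -/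
open MvPolynomial

private lemma coeff_pderiv' {σ R : Type*} [CommSemiring R] [DecidableEq σ]
    (l : σ) (d : σ →₀ ℕ) (p : MvPolynomial σ R) :
    coeff d (pderiv l p) = (d l + 1) * coeff (d + Finsupp.single l 1) p := by
  induction p using MvPolynomial.induction_on' with
  | add p q hp hq => simp [hp, hq, mul_add]
  | monomial s a =>
    rw [pderiv_monomial, coeff_monomial, coeff_monomial]
    by_cases h : s = d + Finsupp.single l 1
    · subst h
      rw [if_pos (add_tsub_cancel_right _ _), if_pos rfl]
      simp [mul_comm]
    · rw [if_neg h]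
      by_cases h2 : s - Finsupp.single l 1 = d
      · rw [if_pos h2]
        by_cases h3 : s l = 0
        · simp [h3]
        · exfalso
          apply h
          rw [← h2, tsub_add_cancel_of_le]
          rw [Finsupp.single_le_iff]
          omega
      · simp [if_neg h2]

private lemma degreeOf_le_of_dvd {n : ℕ} (l : Fin n) {P q : MvPolynomial (Fin n) ℂ}
    (hq : q ≠ 0) (h : P ∣ q) : P.degreeOf l ≤ q.degreeOf l := by
  obtain ⟨r, rfl⟩ := h
  have hP : P ≠ 0 := fun h0 => hq (by simp [h0])
  have hr : r ≠ 0 := fun h0 => hq (by simp [h0])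
  cases n with
  | zero => exact l.elim0
  | succ k =>
    -- move variable l to position 0 via a swap
    set e := Equiv.swap l (0 : Fin (k+1)) with he
    have hinj : Function.Injective e := e.injective
    have hswap : ∀ (t : MvPolynomial (Fin (k+1)) ℂ), t.degreeOf l = (rename e t).degreeOf 0 := by
      intro t
      have := degreeOf_rename_of_injective (p := t) hinj l
      rw [show e l = 0 from Equiv.swap_apply_left l 0] at this
      exact this.symm
    rw [hswap, hswap, map_mul]
    set P' := rename e P
    set r' := rename e r
    have hP' : P' ≠ 0 := fun h0 => hP
      (rename_injective _ hinj (by rw [map_zero]; exact h0))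
    have hr' : r' ≠ 0 := fun h0 => hr
      (rename_injective _ hinj (by rw [map_zero]; exact h0))
    -- use finSuccEquiv
    rw [← natDegree_finSuccEquiv, ← natDegree_finSuccEquiv, map_mul]
    have h1 : finSuccEquiv ℂ k P' ≠ 0 := by
      simp only [ne_eq, EmbeddingLike.map_eq_zero_iff]; exact hP'
    have h2 : finSuccEquiv ℂ k r' ≠ 0 := by
      simp only [ne_eq, EmbeddingLike.map_eq_zero_iff]; exact hr'
    rw [Polynomial.natDegree_mul h1 h2]
    exact Nat.le_add_right _ _

/-- With `g = u·∏ p_j^{α_j}` and `f = v·∏ p_j^{β_j}` (pairwise non-associate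
primes `p_j`, positive exponents), both nonzero homogeneous of positive degree, and
`(deg g)·g·∂f/∂z_l = (deg f)·f·∂g/∂z_l` for all `l`, we get `β_j/α_j = deg f/deg g`,
i.e. `β_j · deg g = α_j · deg f`, for all `j`. -/
theorem stmt1 {n m : ℕ} (u v : ℂ) (hu : u ≠ 0) (hv : v ≠ 0)
    (p : Fin m → MvPolynomial (Fin n) ℂ) (hp : ∀ j, Prime (p j))
    (hnassoc : ∀ i j, i ≠ j → ¬ Associated (p i) (p j))
    (α β : Fin m → ℕ) (hα : ∀ j, 0 < α j) (hβ : ∀ j, 0 < β j)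
    (g f : MvPolynomial (Fin n) ℂ) (dg df : ℕ)
    (hgdef : g = C u * ∏ j, p j ^ α j) (hfdef : f = C v * ∏ j, p j ^ β j)
    (hgh : g.IsHomogeneous dg) (hdg : 0 < dg)
    (hfh : f.IsHomogeneous df) (hdf : 0 < df)
    (heq : ∀ l : Fin n, C (dg : ℂ) * g * pderiv l f = C (df : ℂ) * f * pderiv l g) :
    ∀ j, β j * dg = α j * df := by
  classical
  intro j
  set P := p j with hPdef
  have hPprime : Prime P := hp j
  have hPne : P ≠ 0 := hPprime.ne_zero
  -- P is not a constant: find a monomial d ≠ 0 in its support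
  have hd : ∃ d ∈ P.support, d ≠ 0 := by
    by_contra hcon
    push_neg at hcon
    have hPC : P = C (coeff 0 P) := by
      ext d
      rw [coeff_C]
      by_cases hd0 : d = 0
      · subst hd0; simp
      · rw [if_neg (fun h => hd0 h.symm)]
        by_contra hne
        exact hd0 (hcon d (by simpa [mem_support_iff] using hne))
    have hc0 : coeff 0 P ≠ 0 := fun h0 => hPne (by rw [hPC, h0, map_zero])
    refine hPprime.not_unit ?_
    rw [hPC]
    exact (Ne.isUnit hc0).map (C : ℂ →+* MvPolynomial (Fin n) ℂ)
  obtain ⟨d, hdsupp, hdne⟩ := hd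
  obtain ⟨l, hdl⟩ : ∃ l, d l ≠ 0 := by
    by_contra hcon
    push_neg at hcon
    exact hdne (Finsupp.ext hcon)
  -- the partial derivative in direction l is nonzero
  have hcoeff : coeff (d - Finsupp.single l 1) (pderiv l P) = (d l : ℂ) * coeff d P := by
    rw [coeff_pderiv']
    have hle : Finsupp.single l 1 ≤ d := Finsupp.single_le_iff.2 (by omega)
    rw [tsub_add_cancel_of_le hle]
    congr 1
    rw [Finsupp.tsub_apply, Finsupp.single_eq_same, Nat.cast_sub (by omega : 1 ≤ d l)]
    ring
  have hdP : pderiv l P ≠ 0 := by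
    intro h0
    rw [h0, coeff_zero] at hcoeff
    have := mem_support_iff.1 hdsupp
    have hdlC : (d l : ℂ) ≠ 0 := Nat.cast_ne_zero.2 hdl
    exact this (by
      rcases mul_eq_zero.mp hcoeff.symm with h | h
      · exact absurd h hdlC
      · exact h)
  -- degreeOf in variable l strictly decreases under pderiv l
  have hdeg : (pderiv l P).degreeOf l < P.degreeOf l := by
    have hpos : 0 < P.degreeOf l := by
      have : d l ≤ P.degreeOf l := by
        rw [degreeOf_eq_sup]; exact Finset.le_sup (f := fun m => m l) hdsupp
      omega
    rw [degreeOf_lt_iff hpos]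
    intro e he
    have : coeff (e + Finsupp.single l 1) P ≠ 0 := by
      intro h0
      have := coeff_pderiv' l e P
      rw [h0, mul_zero] at this
      exact (mem_support_iff.1 he) this
    have hle : e l + 1 ≤ P.degreeOf l := by
      rw [degreeOf_eq_sup]
      have := Finset.le_sup (f := fun m => m l) (mem_support_iff.2 this)
      simpa using this
    omega
  have hPnd : ¬ P ∣ pderiv l P := by
    intro hdvd
    exact absurd (degreeOf_le_of_dvd l hdP hdvd) (by omega)
  -- split off the j-th factor
  set G : MvPolynomial (Fin n) ℂ := C u * ∏ i ∈ Finset.univ.erase j, p i ^ α i with hGdef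
  set F : MvPolynomial (Fin n) ℂ := C v * ∏ i ∈ Finset.univ.erase j, p i ^ β i with hFdef
  obtain ⟨a', ha'⟩ : ∃ a', α j = a' + 1 := ⟨α j - 1, by have := hα j; omega⟩
  obtain ⟨b', hb'⟩ : ∃ b', β j = b' + 1 := ⟨β j - 1, by have := hβ j; omega⟩
  have hg' : g = P ^ (a' + 1) * G := by
    rw [hgdef, hGdef, ← Finset.mul_prod_erase _ _ (Finset.mem_univ j), ← ha']
    ring
  have hf' : f = P ^ (b' + 1) * F := by
    rw [hfdef, hFdef, ← Finset.mul_prod_erase _ _ (Finset.mem_univ j), ← hb']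
    ring
  -- P does not divide G or F
  have hnotdvd : ∀ (w : ℂ) (hw : w ≠ 0) (γ : Fin m → ℕ),
      ¬ P ∣ C w * ∏ i ∈ Finset.univ.erase j, p i ^ γ i := by
    intro w hw γ hdvd
    rcases hPprime.dvd_mul.mp hdvd with h | h
    · exact hPprime.not_unit (isUnit_of_dvd_unit h ((Ne.isUnit hw).map (C : ℂ →+* _)))
    · obtain ⟨i, hi, hdvd2⟩ := (hPprime.dvd_finset_prod_iff _).mp h
      have hij : i ≠ j := Finset.ne_of_mem_erase hi
      have : P ∣ p i := hPprime.dvd_of_dvd_pow hdvd2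
      exact hnassoc j i hij.symm ((hPprime.associated_of_dvd (hp i) this))
  have hPG : ¬ P ∣ G := hnotdvd u hu α
  have hPF : ¬ P ∣ F := hnotdvd v hv β
  -- rewrite the main equation
  have heql := heq l
  rw [hg', hf'] at heql
  simp only [pderiv_mul, pderiv_pow, Nat.add_sub_cancel, C_eq_coe_nat] at heql
  push_cast at heql
  have hkey : P ^ (a' + b' + 1) *
      (((dg : MvPolynomial (Fin n) ℂ) * ((b' : MvPolynomial (Fin n) ℂ) + 1)
        - (df : MvPolynomial (Fin n) ℂ) * ((a' : MvPolynomial (Fin n) ℂ) + 1))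
        * (G * F * pderiv l P)) =
      P ^ (a' + b' + 1) *
      (P * ((df : MvPolynomial (Fin n) ℂ) * F * pderiv l G
        - (dg : MvPolynomial (Fin n) ℂ) * G * pderiv l F)) := by
    linear_combination heql
  have hkey2 := mul_left_cancel₀ (pow_ne_zero (a' + b' + 1) hPne) hkey
  have hdvd : P ∣ ((dg : MvPolynomial (Fin n) ℂ) * ((b' : MvPolynomial (Fin n) ℂ) + 1)
        - (df : MvPolynomial (Fin n) ℂ) * ((a' : MvPolynomial (Fin n) ℂ) + 1))
        * (G * F * pderiv l P) := ⟨_, hkey2⟩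
  rcases hPprime.dvd_mul.mp hdvd with h | h
  · -- P divides a constant, so the constant is zero
    set c : ℂ := (dg : ℂ) * ((b' : ℂ) + 1) - (df : ℂ) * ((a' : ℂ) + 1) with hc
    have hCc : ((dg : MvPolynomial (Fin n) ℂ) * ((b' : MvPolynomial (Fin n) ℂ) + 1)
        - (df : MvPolynomial (Fin n) ℂ) * ((a' : MvPolynomial (Fin n) ℂ) + 1)) = C c := by
      rw [hc]
      push_cast
      simp [map_sub, map_mul, map_add, map_natCast]
    rw [hCc] at h
    have hc0 : c = 0 := by
      by_contra hcne
      exact hPprime.not_unit (isUnit_of_dvd_unit h ((Ne.isUnit hcne).map (C : ℂ →+* _)))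
    have : (dg : ℂ) * ((b' : ℂ) + 1) = (df : ℂ) * ((a' : ℂ) + 1) := by
      rw [hc] at hc0
      exact sub_eq_zero.mp hc0
    have hnat : dg * (b' + 1) = df * (a' + 1) := by
      exact_mod_cast this
    rw [ha', hb', Nat.mul_comm (b' + 1) dg, hnat, Nat.mul_comm]
  · -- impossible: P divides none of G, F, ∂P
    rcases hPprime.dvd_mul.mp h with h2 | h2
    · rcases hPprime.dvd_mul.mp h2 with h3 | h3
      · exact absurd h3 hPG
      · exact absurd h3 hPF
    · exact absurd h2 hPnd
end

section
/- Let g be a nonzero homogeneous polynomial of positive degree in C[z_1,...,z_n], let M_g be the largest positive integer m such that g is an m-th power of a homogeneous polynomial, and let h be a homogeneous polynomial with g = h^{M_g}. If f is a nonzero homogeneous polynomial of positive degree satisfying (deg g)·g·(∂f/∂z_l) = (deg f)·f·(∂g/∂z_l) for all l ∈ {1,...,n}, then M_g·(deg f)/(deg g) is a positive integer and f = c·h^{M_g·(deg f)/(deg g)} for some nonzero constant c ∈ C. -/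
open MvPolynomial


noncomputable section
variable {σ : Type*}

def Phi : MvPolynomial σ ℂ →ₐ[ℂ] Polynomial (MvPolynomial σ ℂ) :=
  aeval (fun i => Polynomial.C (X i) * Polynomial.X)

lemma Phi_monomial (d : σ →₀ ℕ) (c : ℂ) :
    Phi (monomial d c) = Polynomial.C (monomial d c) * Polynomial.X ^ d.degree := by
  rw [Phi, aeval_monomial]
  have h1 : (d.prod fun i k => (Polynomial.C (X i : MvPolynomial σ ℂ) * Polynomial.X) ^ k)
      = Polynomial.C (d.prod fun i k => (X i : MvPolynomial σ ℂ) ^ k) * Polynomial.X ^ d.degree := by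
    rw [Finsupp.prod]
    simp_rw [mul_pow]
    rw [Finset.prod_mul_distrib, Finset.prod_pow_eq_pow_sum]
    congr 1
    · rw [Finsupp.prod, map_prod]
      simp [map_pow]
  rw [h1, monomial_eq, map_mul]
  have : algebraMap ℂ (Polynomial (MvPolynomial σ ℂ)) c = Polynomial.C (C c) := rfl
  rw [this]
  ring

lemma coeff_Phi (φ : MvPolynomial σ ℂ) (k : ℕ) :
    (Phi φ).coeff k = homogeneousComponent k φ := by
  induction φ using MvPolynomial.induction_on' with
  | monomial d c =>
    rw [Phi_monomial, Polynomial.coeff_C_mul, Polynomial.coeff_X_pow]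
    have hmem : (monomial d c) ∈ homogeneousSubmodule σ ℂ d.degree :=
      isHomogeneous_monomial c rfl
    rw [homogeneousComponent_of_mem hmem]
    by_cases h : k = d.degree <;> simp [h]
  | add p q hp hq =>
    rw [map_add, Polynomial.coeff_add, hp, hq, map_add]

end

noncomputable section
variable {σ : Type*}

lemma Phi_eq_zero_iff {φ : MvPolynomial σ ℂ} : Phi φ = 0 ↔ φ = 0 := by
  constructor
  · intro h
    rw [← sum_homogeneousComponent φ]
    apply Finset.sum_eq_zero
    intro k _
    rw [← coeff_Phi, h, Polynomial.coeff_zero]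
  · rintro rfl; exact map_zero _

lemma isHomog_of_components {φ : MvPolynomial σ ℂ} {a : ℕ}
    (h : ∀ k, k ≠ a → homogeneousComponent k φ = 0) : φ.IsHomogeneous a := by
  rw [← sum_homogeneousComponent φ]
  apply IsHomogeneous.sum
  intro k _
  by_cases hk : k = a
  · subst hk; exact homogeneousComponent_isHomogeneous k φ
  · rw [h k hk]; exact isHomogeneous_zero _ _ _

lemma Phi_of_homog {φ : MvPolynomial σ ℂ} {m : ℕ} (hφ : φ.IsHomogeneous m) :
    Phi φ = Polynomial.C φ * Polynomial.X ^ m := by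
  ext k
  rw [coeff_Phi, Polynomial.coeff_C_mul, Polynomial.coeff_X_pow,
    homogeneousComponent_of_mem (p := φ) (n := m) hφ]
  by_cases h : k = m <;> simp [h]

/-- divisors of nonzero homogeneous polynomials are homogeneous -/
lemma dvd_homog {p q : MvPolynomial σ ℂ} {m : ℕ} (hp : p ≠ 0) (hq : q ≠ 0)
    (hm : (p * q).IsHomogeneous m) :
    ∃ a b : ℕ, a + b = m ∧ p.IsHomogeneous a ∧ q.IsHomogeneous b := by
  have hpq : p * q ≠ 0 := mul_ne_zero hp hq
  have hPhi : Phi p * Phi q = Polynomial.C (p * q) * Polynomial.X ^ m := by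
    rw [← map_mul, Phi_of_homog hm]
  have hP0 : Phi p ≠ 0 := by rwa [Ne, Phi_eq_zero_iff]
  have hQ0 : Phi q ≠ 0 := by rwa [Ne, Phi_eq_zero_iff]
  have hmon : Polynomial.C (p * q) * Polynomial.X ^ m = Polynomial.monomial m (p * q) := by
    rw [Polynomial.C_mul_X_pow_eq_monomial]
  have hdeg : (Phi p).natDegree + (Phi q).natDegree = m := by
    rw [← Polynomial.natDegree_mul hP0 hQ0, hPhi, hmon, Polynomial.natDegree_monomial_eq m hpq]
  have htdeg : (Phi p).natTrailingDegree + (Phi q).natTrailingDegree = m := by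
    rw [← Polynomial.natTrailingDegree_mul hP0 hQ0, hPhi, hmon,
      Polynomial.natTrailingDegree_monomial hpq]
  have h1 : (Phi p).natTrailingDegree = (Phi p).natDegree := by
    have := Polynomial.natTrailingDegree_le_natDegree (Phi p)
    have := Polynomial.natTrailingDegree_le_natDegree (Phi q)
    omega
  have h2 : (Phi q).natTrailingDegree = (Phi q).natDegree := by
    have := Polynomial.natTrailingDegree_le_natDegree (Phi p)
    have := Polynomial.natTrailingDegree_le_natDegree (Phi q)
    omega
  refine ⟨(Phi p).natDegree, (Phi q).natDegree, hdeg, ?_, ?_⟩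
  · apply isHomog_of_components
    intro k hk
    rw [← coeff_Phi]
    rcases lt_or_gt_of_ne hk with h | h
    · exact Polynomial.coeff_eq_zero_of_lt_natTrailingDegree (by omega)
    · exact Polynomial.coeff_eq_zero_of_natDegree_lt h
  · apply isHomog_of_components
    intro k hk
    rw [← coeff_Phi]
    rcases lt_or_gt_of_ne hk with h | h
    · exact Polynomial.coeff_eq_zero_of_lt_natTrailingDegree (by omega)
    · exact Polynomial.coeff_eq_zero_of_natDegree_lt h

lemma homog_zero_eq_C [DecidableEq σ] {φ : MvPolynomial σ ℂ} (hφ : φ.IsHomogeneous 0) :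
    φ = C (coeff 0 φ) := by
  ext d
  by_cases hd : d = 0
  · subst hd; simp
  · rw [hφ.coeff_eq_zero (by rwa [Ne, Finsupp.degree_eq_zero_iff]), coeff_C, if_neg (Ne.symm hd)]

lemma unit_eq_C [DecidableEq σ] {u : MvPolynomial σ ℂ} (hu : IsUnit u) :
    ∃ c : ℂ, c ≠ 0 ∧ u = C c := by
  obtain ⟨v, hv⟩ := hu.exists_right_inv
  have hu0 : u ≠ 0 := by rintro rfl; simp at hv
  have hv0 : v ≠ 0 := by rintro rfl; simp at hv
  have h1 : (u * v).IsHomogeneous 0 := by rw [hv]; exact isHomogeneous_one σ ℂ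
  obtain ⟨a, b, hab, hua, -⟩ := dvd_homog hu0 hv0 h1
  have ha : a = 0 := by omega
  subst ha
  refine ⟨coeff 0 u, ?_, homog_zero_eq_C hua⟩
  intro hc
  rw [homog_zero_eq_C hua, hc, map_zero] at hu0
  exact hu0 rfl

end

noncomputable section
variable {σ : Type*} [DecidableEq σ]

lemma coeff_pderiv (i : σ) (m : σ →₀ ℕ) (u : MvPolynomial σ ℂ) :
    coeff m (pderiv i u) = coeff (m + Finsupp.single i 1) u * ((m i : ℂ) + 1) := by
  induction u using MvPolynomial.induction_on' with
  | monomial d c =>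
    rw [pderiv_monomial, coeff_monomial, coeff_monomial]
    by_cases h : d = m + Finsupp.single i 1
    · subst h
      have hdi : ((m + Finsupp.single i 1) : σ →₀ ℕ) i = m i + 1 := by
        rw [Finsupp.add_apply, Finsupp.single_eq_same]
      have hsub : m + Finsupp.single i 1 - Finsupp.single i 1 = m := by
        ext j; by_cases hj : j = i
        · subst hj; simp
        · rw [Finsupp.tsub_apply, Finsupp.add_apply, Finsupp.single_apply,
            if_neg (fun hc => hj hc.symm)]; omega
      rw [if_pos hsub, hdi]
      simp only [if_pos rfl, eq_self_iff_true, if_true]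
      push_cast; ring
    · rw [if_neg h]
      by_cases h2 : d - Finsupp.single i 1 = m
      · have hdi : d i = 0 := by
          by_contra hdi
          apply h
          rw [← h2]
          ext j
          by_cases hj : j = i
          · subst hj; simp; omega
          · rw [Finsupp.add_apply, Finsupp.single_apply, if_neg (fun hc => hj hc.symm),
              Finsupp.tsub_apply, Finsupp.single_apply, if_neg (fun hc => hj hc.symm)]
            omega
        rw [if_pos h2, hdi]
        simp
      · rw [if_neg h2]; simp
  | add p q hp hq => simp [map_add, coeff_add, hp, hq]; ring

lemma pderiv_homog {u : MvPolynomial σ ℂ} {m : ℕ} (hu : u.IsHomogeneous m) (i : σ) :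
    (pderiv i u).IsHomogeneous (m - 1) := by
  intro d hd
  rw [_root_.coeff_pderiv] at hd
  have h1 : coeff (d + Finsupp.single i 1) u ≠ 0 := by
    intro h; rw [h] at hd; simp at hd
  have h2 := hu h1
  rw [show (Finsupp.weight (1 : σ → ℕ)) = Finsupp.weight (fun _ => 1) from rfl,
    ← Finsupp.degree_eq_weight_one] at h2 ⊢
  have hadd : (d + Finsupp.single i 1).degree = d.degree + 1 := by
    rw [Finsupp.degree_eq_weight_one, map_add]
    congr 1
    simp [Finsupp.weight_apply, Finsupp.sum_single_index]
  omega

lemma homog_deg_zero_of_dvd_pderiv {u : MvPolynomial σ ℂ} {e : ℕ} (hu0 : u ≠ 0)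
    (hu : u.IsHomogeneous e) (H : ∀ i, u ∣ pderiv i u) : e = 0 := by
  by_contra he
  obtain ⟨d, hd⟩ := (support_nonempty.2 hu0)
  have hdc : coeff d u ≠ 0 := mem_support_iff.1 hd
  have hde : d.degree = e := by
    have := hu hdc; rwa [show (Finsupp.weight (1 : σ → ℕ)) = Finsupp.weight (fun _ => 1) from rfl,
      ← Finsupp.degree_eq_weight_one] at this
  have hd0 : d ≠ 0 := by
    intro h; rw [h, map_zero] at hde; exact he hde.symm
  obtain ⟨i, hi⟩ : ∃ i, d i ≠ 0 := by
    by_contra hc; push_neg at hc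
    exact hd0 (Finsupp.ext fun j => hc j)
  -- pderiv i u ≠ 0
  obtain ⟨j, hj⟩ : ∃ j, d = j + Finsupp.single i 1 := by
    refine ⟨d - Finsupp.single i 1, ?_⟩
    ext l; by_cases hl : l = i
    · subst hl; simp; omega
    · rw [Finsupp.add_apply, Finsupp.tsub_apply, Finsupp.single_apply,
        if_neg (fun hc => hl hc.symm)]; omega
  have hpder : pderiv i u ≠ 0 := by
    intro h0
    have := _root_.coeff_pderiv i j u
    rw [h0, ← hj] at this
    simp only [coeff_zero] at this
    have hne : ((j i : ℂ) + 1) ≠ 0 := by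
      have h' : ((j i + 1 : ℕ) : ℂ) ≠ 0 := Nat.cast_ne_zero.mpr (by omega)
      push_cast at h'
      exact h'
    exact hdc ((mul_eq_zero.mp this.symm).resolve_right hne)
  obtain ⟨w, hw⟩ := H i
  have hw0 : w ≠ 0 := by rintro rfl; rw [mul_zero] at hw; exact hpder hw
  have hhom : (u * w).IsHomogeneous (e - 1) := hw ▸ pderiv_homog hu i
  obtain ⟨a, b, hab, hua, -⟩ := dvd_homog hu0 hw0 hhom
  have := hu.inj_right hua hu0
  omega

end

/-- Let `g` be a nonzero homogeneous polynomial of positive degree, `M = M_g`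
the largest positive integer such that `g` is an `M`-th power of a homogeneous polynomial,
and `h` homogeneous with `g = h^M`. If `f` is nonzero homogeneous of positive degree with
`(deg g)·g·∂f/∂z_l = (deg f)·f·∂g/∂z_l` for all `l`, then `M·(deg f)/(deg g)` is a positive
integer and `f = c·h^{M·deg f/deg g}` for some nonzero constant `c`. -/
theorem stmt3 {n : ℕ} (g f h : MvPolynomial (Fin n) ℂ) (dg df dh M : ℕ)
    (hg0 : g ≠ 0) (hgh : g.IsHomogeneous dg) (hdg : 0 < dg)
    (hM : 0 < M)
    (hMmem : ∃ h' : MvPolynomial (Fin n) ℂ, (∃ e : ℕ, h'.IsHomogeneous e) ∧ g = h' ^ M)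
    (hMmax : ∀ m : ℕ, 0 < m →
      (∃ h' : MvPolynomial (Fin n) ℂ, (∃ e : ℕ, h'.IsHomogeneous e) ∧ g = h' ^ m) → m ≤ M)
    (hhh : h.IsHomogeneous dh) (hghM : g = h ^ M)
    (hf0 : f ≠ 0) (hfh : f.IsHomogeneous df) (hdf : 0 < df)
    (heq : ∀ l : Fin n, C (dg : ℂ) * g * pderiv l f = C (df : ℂ) * f * pderiv l g) :
    (dg ∣ M * df ∧ 0 < M * df / dg) ∧
    ∃ c : ℂ, c ≠ 0 ∧ f = C c * h ^ (M * df / dg) := by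
  classical
  letI : NormalizationMonoid (MvPolynomial (Fin n) ℂ) :=
    UniqueFactorizationMonoid.normalizationMonoid.toNormalizationMonoid
  letI : GCDMonoid (MvPolynomial (Fin n) ℂ) :=
    UniqueFactorizationMonoid.toGCDMonoid _
  set F := f ^ dg with hF
  set G := g ^ df with hG
  have hF0 : F ≠ 0 := pow_ne_zero _ hf0
  have hG0 : G ≠ 0 := pow_ne_zero _ hg0
  -- Step 1a: the cross relation for powers
  have key : ∀ l, pderiv l F * G = pderiv l G * F := by
    intro l
    have hh := heq l
    rw [map_natCast C dg, map_natCast C df] at hh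
    rw [hF, hG, pderiv_pow, pderiv_pow]
    have hfe : f ^ dg = f ^ (dg - 1) * f := by rw [← pow_succ]; congr 1; omega
    have hge : g ^ df = g ^ (df - 1) * g := by rw [← pow_succ]; congr 1; omega
    rw [hfe, hge]
    linear_combination (f ^ (dg - 1) * g ^ (df - 1)) * hh
  -- Step 1b: extract gcd
  obtain ⟨u, v, hu, hv, huv⟩ := extract_gcd F G
  set D := gcd F G with hD
  have hD0 : D ≠ 0 := by rintro hE; rw [hE, zero_mul] at hu; exact hF0 hu
  have hu0 : u ≠ 0 := by rintro rfl; rw [mul_zero] at hu; exact hF0 hu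
  have hv0 : v ≠ 0 := by rintro rfl; rw [mul_zero] at hv; exact hG0 hv
  have hrel : IsRelPrime u v := gcd_isUnit_iff_isRelPrime.mp huv
  have huv_rel : ∀ l, pderiv l u * v = pderiv l v * u := by
    intro l
    have k := key l
    rw [hu, hv] at k
    simp only [pderiv_mul] at k
    have h2 : D ^ 2 * (pderiv l u * v) = D ^ 2 * (pderiv l v * u) := by linear_combination k
    exact mul_left_cancel₀ (pow_ne_zero 2 hD0) h2
  have hFhom : F.IsHomogeneous (df * dg) := hfh.pow dg
  have hGhom : G.IsHomogeneous (dg * df) := hgh.pow df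
  obtain ⟨eD, eu, -, -, huh⟩ := dvd_homog hD0 hu0 (hu ▸ hFhom)
  obtain ⟨eD', ev, -, -, hvh⟩ := dvd_homog hD0 hv0 (hv ▸ hGhom)
  have hudvd : ∀ l, u ∣ pderiv l u := by
    intro l
    refine hrel.dvd_of_dvd_mul_right ⟨pderiv l v, ?_⟩
    rw [huv_rel l]; ring
  have hvdvd : ∀ l, v ∣ pderiv l v := by
    intro l
    refine hrel.symm.dvd_of_dvd_mul_right ⟨pderiv l u, ?_⟩
    rw [← huv_rel l]; ring
  have heu : eu = 0 := homog_deg_zero_of_dvd_pderiv hu0 huh hudvd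
  have hev : ev = 0 := homog_deg_zero_of_dvd_pderiv hv0 hvh hvdvd
  subst heu hev
  have hcu0 : coeff 0 u ≠ 0 := by
    intro hc; apply hu0; rw [homog_zero_eq_C huh, hc, map_zero]
  have hcv0 : coeff 0 v ≠ 0 := by
    intro hc; apply hv0; rw [homog_zero_eq_C hvh, hc, map_zero]
  set cu := coeff 0 u
  set cv := coeff 0 v
  set c1 := cu / cv with hc1
  have hc10 : c1 ≠ 0 := div_ne_zero hcu0 hcv0
  have hCcv0 : (C cv : MvPolynomial (Fin n) ℂ) ≠ 0 := by
    simpa using hcv0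
  have hc1cv : c1 * cv = cu := div_mul_cancel₀ _ hcv0
  have hFG : F = C c1 * G := by
    apply mul_right_cancel₀ hCcv0
    have hmul : F * C cv = G * C cu := by
      rw [hu, hv, homog_zero_eq_C huh, homog_zero_eq_C hvh]; ring
    rw [hmul, ← hc1cv, map_mul]; ring
  -- Step 2: dg ∣ M * df
  have hh0 : h ≠ 0 := by rintro rfl; rw [zero_pow hM.ne'] at hghM; exact hg0 hghM
  have hFh2 : f ^ dg = C c1 * h ^ (M * df) := by
    rw [← hF, hFG, hG, hghM, ← pow_mul]
  have hCc1 : IsUnit (C c1 : MvPolynomial (Fin n) ℂ) :=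
    (isUnit_iff_ne_zero.mpr hc10).map (C : ℂ →+* MvPolynomial (Fin n) ℂ)
  have hassoc : Associated (f ^ dg) (h ^ (M * df)) := by
    rw [hFh2, mul_comm]
    exact associated_mul_unit_left _ _ hCc1
  have hfac : dg • UniqueFactorizationMonoid.normalizedFactors f
      = (M * df) • UniqueFactorizationMonoid.normalizedFactors h := by
    have := hassoc.normalizedFactors_eq
    rwa [UniqueFactorizationMonoid.normalizedFactors_pow,
      UniqueFactorizationMonoid.normalizedFactors_pow] at this
  set d := Nat.gcd dg (M * df) with hdd
  have hd0 : 0 < d := Nat.gcd_pos_of_pos_left _ hdg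
  set a := dg / d with hadef
  set b := (M * df) / d with hbdef
  have hda : d * a = dg := Nat.mul_div_cancel' (Nat.gcd_dvd_left _ _)
  have hdb : d * b = M * df := Nat.mul_div_cancel' (Nat.gcd_dvd_right _ _)
  have ha1 : 1 ≤ a := Nat.one_le_iff_ne_zero.mpr (by rintro hE; rw [hE, mul_zero] at hda; omega)
  have hcop : Nat.Coprime a b := Nat.coprime_div_gcd_div_gcd hd0
  have hcount : ∀ p, a ∣ Multiset.count p (UniqueFactorizationMonoid.normalizedFactors h) := by
    intro p
    have hc := congrArg (Multiset.count p) hfac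
    rw [Multiset.count_nsmul, Multiset.count_nsmul] at hc
    set cf := Multiset.count p (UniqueFactorizationMonoid.normalizedFactors f)
    set ch := Multiset.count p (UniqueFactorizationMonoid.normalizedFactors h)
    have hab : a * cf = b * ch := by
      have : d * (a * cf) = d * (b * ch) := by
        rw [← mul_assoc, ← mul_assoc, hda, hdb]; exact hc
      exact Nat.eq_of_mul_eq_mul_left hd0 this
    exact (Nat.Coprime.dvd_of_dvd_mul_left hcop ⟨cf, by omega⟩)
  set Nh := UniqueFactorizationMonoid.normalizedFactors h with hNh
  set m0 : Multiset (MvPolynomial (Fin n) ℂ) :=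
    (Nh.toFinsupp.mapRange (· / a) (Nat.zero_div a)).toMultiset with hm0def
  have hm0 : a • m0 = Nh := by
    ext p
    rw [Multiset.count_nsmul, hm0def, Finsupp.count_toMultiset, Finsupp.mapRange_apply,
      Multiset.toFinsupp_apply]
    exact Nat.mul_div_cancel' (hcount p)
  set w := m0.prod with hwdef
  have hwassoc : Associated (w ^ a) h := by
    have h1 := UniqueFactorizationMonoid.prod_normalizedFactors hh0
    rw [← hNh, ← hm0, Multiset.prod_nsmul] at h1
    exact h1
  obtain ⟨un, hun⟩ := hwassoc
  obtain ⟨e0, he00, he0⟩ := unit_eq_C un.isUnit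
  have hhw : h = C e0 * w ^ a := by rw [← hun, he0]; ring
  have hw0 : w ≠ 0 := by
    intro hE
    rw [hE, zero_pow (by omega : a ≠ 0), mul_zero] at hhw
    exact hh0 hhw
  -- homogeneity of w
  obtain ⟨ew, eb, -, hwhom, -⟩ : ∃ ew eb, ew + eb = dh ∧ w.IsHomogeneous ew ∧ _ := by
    have hsplit : h = w * (C e0 * w ^ (a - 1)) := by
      rw [hhw]
      have : w ^ a = w * w ^ (a - 1) := by
        rw [← pow_succ']; congr 1; omega
      rw [this]; ring
    have hcof0 : (C e0 * w ^ (a - 1) : MvPolynomial (Fin n) ℂ) ≠ 0 := by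
      apply mul_ne_zero _ (pow_ne_zero _ hw0)
      simpa using he00
    exact dvd_homog hw0 hcof0 (hsplit ▸ hhh)
  -- maximality argument
  have haM : a = 1 := by
    by_contra hne
    have haM2 : a * M ≤ M := by
      obtain ⟨z, hz⟩ := IsAlgClosed.exists_pow_nat_eq (k := ℂ) (e0 ^ M)
        (n := a * M) (by positivity)
      apply hMmax (a * M) (by positivity)
      refine ⟨C z * w, ⟨ew, hwhom.C_mul z⟩, ?_⟩
      rw [mul_pow, ← map_pow, hz, map_pow, hghM, hhw, mul_pow, ← map_pow, ← pow_mul]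
    have h2M : 2 * M ≤ a * M := Nat.mul_le_mul_right M (by omega)
    omega
  have hdvd : dg ∣ M * df := by
    rw [← hda, haM, mul_one, hdd]
    exact Nat.gcd_dvd_right _ _
  have hkpos : 0 < M * df / dg :=
    Nat.div_pos (Nat.le_of_dvd (by positivity) hdvd) hdg
  -- Step 3
  set k := M * df / dg with hkdef
  have hk : dg * k = M * df := Nat.mul_div_cancel' hdvd
  have hhk0 : h ^ k ≠ 0 := pow_ne_zero _ hh0
  have hassoc2 : Associated (f ^ dg) ((h ^ k) ^ dg) := by
    rw [← pow_mul, mul_comm k dg, hk]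
    exact hassoc
  have hfac2 : UniqueFactorizationMonoid.normalizedFactors f
      = UniqueFactorizationMonoid.normalizedFactors (h ^ k) := by
    have h1 := hassoc2.normalizedFactors_eq
    rw [UniqueFactorizationMonoid.normalizedFactors_pow,
      UniqueFactorizationMonoid.normalizedFactors_pow] at h1
    ext p
    have := congrArg (Multiset.count p) h1
    rw [Multiset.count_nsmul, Multiset.count_nsmul] at this
    exact Nat.eq_of_mul_eq_mul_left hdg this
  have hassoc3 : Associated (h ^ k) f :=
    ((UniqueFactorizationMonoid.associated_iff_normalizedFactors_eq_normalizedFactors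
      hf0 hhk0).mpr hfac2).symm
  obtain ⟨un2, hun2⟩ := hassoc3
  obtain ⟨c, hc0, hc⟩ := unit_eq_C un2.isUnit
  exact ⟨⟨hdvd, hkpos⟩, c, hc0, by rw [← hun2, hc]; ring⟩
end

section
/- Let P: C^n → R be a homogeneous plurisubharmonic polynomial of degree 2k without pluriharmonic terms, written as P(z) = Σ_{(α,β)∈J} a_{α,β} z^α z̄^β where J consists of pairs of multi-indices with |α|>0, |β|>0, |α|+|β|=2k. Let A = {α : |α|=k and a_{α,α} ≠ 0}, and let C = {(c_1,...,c_n) ∈ C^n : Σ_j α_j c_j = 0 for all α ∈ A}. Then for all (c_1,...,c_n) ∈ C and all z = (z_1,...,z_n) ∈ C^n, the Levi form of P at z in the direction (c_1 z_1,...,c_n z_n) vanishes: L(P; z, (c_1 z_1,...,c_n z_n)^t) = 0. -/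
open Finset
open scoped ComplexConjugate

/-- Multi-index power `z^α = ∏ i, z i ^ α i`. -/
noncomputable def mpow {n : ℕ} (z : Fin n → ℂ) (α : Fin n →₀ ℕ) : ℂ :=
  ∏ i, z i ^ α i

/-- Value of the polynomial `P(z) = ∑_{(α,β)∈J} a_{α,β} z^α z̄^β`. -/
noncomputable def pval {n : ℕ} (J : Finset ((Fin n →₀ ℕ) × (Fin n →₀ ℕ)))
    (a : (Fin n →₀ ℕ) × (Fin n →₀ ℕ) → ℂ) (z : Fin n → ℂ) : ℂ :=
  ∑ p ∈ J, a p * mpow z p.1 * conj (mpow z p.2)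

/-- Levi form `L(P; z, V) = ∑_{i,j} (∂²P/∂z_i∂z̄_j)(z) V_i conj(V_j)` of
`P(z) = ∑_{(α,β)∈J} a_{α,β} z^α z̄^β`, computed termwise via
`∂²(z^α z̄^β)/∂z_i∂z̄_j = α_i β_j z^{α-e_i} z̄^{β-e_j}`. -/
noncomputable def leviForm {n : ℕ} (J : Finset ((Fin n →₀ ℕ) × (Fin n →₀ ℕ)))
    (a : (Fin n →₀ ℕ) × (Fin n →₀ ℕ) → ℂ) (z V : Fin n → ℂ) : ℂ :=
  ∑ p ∈ J, a p * ∑ i, ∑ j,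
    (p.1 i : ℂ) * (p.2 j : ℂ) * mpow z (p.1 - Finsupp.single i 1) *
      conj (mpow z (p.2 - Finsupp.single j 1)) * V i * conj (V j)

lemma mpow_succ {n : ℕ} (z : Fin n → ℂ) (α : Fin n →₀ ℕ) (i : Fin n) (h : α i ≠ 0) :
    z i * mpow z (α - Finsupp.single i 1) = mpow z α := by
  unfold mpow
  rw [← Finset.mul_prod_erase (univ : Finset (Fin n)) _ (mem_univ i),
      ← Finset.mul_prod_erase (univ : Finset (Fin n)) (fun j => z j ^ α j) (mem_univ i),
      ← mul_assoc]
  congr 1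
  · rw [Finsupp.tsub_apply, Finsupp.single_eq_same, ← pow_succ']
    congr 1; omega
  · apply Finset.prod_congr rfl
    intro j hj
    have hji : i ≠ j := by simpa using (mem_erase.mp hj).1.symm
    rw [Finsupp.tsub_apply, Finsupp.single_eq_of_ne' hji]
    simp

/-- `∑ i, α_i c_i z_i z^{α-e_i} = (∑ i, α_i c_i) z^α`. -/
lemma sum_deriv {n : ℕ} (z c : Fin n → ℂ) (α : Fin n →₀ ℕ) :
    ∑ i, (α i : ℂ) * c i * (z i * mpow z (α - Finsupp.single i 1))
      = (∑ i, (α i : ℂ) * c i) * mpow z α := by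
  rw [Finset.sum_mul]
  apply Finset.sum_congr rfl
  intro i _
  by_cases h : α i = 0
  · simp [h]
  · rw [mpow_succ z α i h]

/-- The Levi form in the direction `(c_1 z_1, …, c_n z_n)` factorizes. -/
lemma levi_eq {n : ℕ} (J : Finset ((Fin n →₀ ℕ) × (Fin n →₀ ℕ)))
    (a : (Fin n →₀ ℕ) × (Fin n →₀ ℕ) → ℂ) (c z : Fin n → ℂ) :
    leviForm J a z (fun i => c i * z i)
      = pval J (fun p => a p * (∑ i, (p.1 i : ℂ) * c i) * conj (∑ j, (p.2 j : ℂ) * c j)) z := by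
  unfold leviForm pval
  apply Finset.sum_congr rfl
  intro p _
  have h1 : (∑ i, ∑ j, (p.1 i : ℂ) * (p.2 j : ℂ) * mpow z (p.1 - Finsupp.single i 1) *
      conj (mpow z (p.2 - Finsupp.single j 1)) * (c i * z i) * conj (c j * z j))
      = (∑ i, (p.1 i : ℂ) * c i * (z i * mpow z (p.1 - Finsupp.single i 1))) *
        (∑ j, conj ((p.2 j : ℂ) * c j * (z j * mpow z (p.2 - Finsupp.single j 1)))) := by
    rw [Finset.sum_mul_sum]
    apply Finset.sum_congr rfl; intro i _
    apply Finset.sum_congr rfl; intro j _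
    simp only [map_mul, Complex.conj_natCast]
    ring
  rw [h1, ← map_sum, sum_deriv, sum_deriv]
  simp only [map_mul]
  ring

/-- conjugation of `pval` with Hermitian coefficients is the identity. -/
lemma pval_conj_self {n : ℕ} (J : Finset ((Fin n →₀ ℕ) × (Fin n →₀ ℕ)))
    (b : (Fin n →₀ ℕ) × (Fin n →₀ ℕ) → ℂ)
    (hsymJ : ∀ p ∈ J, (p.2, p.1) ∈ J)
    (hbh : ∀ p, b (p.2, p.1) = conj (b p)) (z : Fin n → ℂ) :
    conj (pval J b z) = pval J b z := by
  unfold pval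
  rw [map_sum]
  refine Finset.sum_nbij' (i := fun p => (p.2, p.1)) (j := fun p => (p.2, p.1))
    (fun p hp => hsymJ p hp) (fun p hp => hsymJ p hp) (fun p _ => rfl) (fun p _ => rfl) ?_
  intro p _
  rw [map_mul, map_mul, Complex.conj_conj, hbh p]
  ring

/-- scaling of `mpow` by coordinatewise powers of `ω`. -/
lemma mpow_scale {n : ℕ} (ω : ℂ) (m : Fin n → ℕ) (z : Fin n → ℂ) (α : Fin n →₀ ℕ) :
    mpow (fun j => ω ^ m j * z j) α = (∏ j, (ω ^ α j) ^ m j) * mpow z α := by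
  unfold mpow
  rw [← Finset.prod_mul_distrib]
  exact Finset.prod_congr rfl fun j _ => by rw [mul_pow, pow_right_comm]

/-- geometric-sum vanishing. -/
lemma geom_vanish (x : ℂ) (N : ℕ) (h1 : x ≠ 1) (hN : x ^ N = 1) :
    ∑ t ∈ range N, x ^ t = 0 := by
  rw [geom_sum_eq h1, hN]; simp

/-- let `P(z) = ∑_{(α,β)∈J} a_{α,β} z^α z̄^β` be a real-valued (Hermitian
coefficients), plurisubharmonic polynomial, homogeneous of degree `2k`, without
pluriharmonic terms.  If `(c_1,…,c_n)` satisfies `∑_j α_j c_j = 0` for every `α` with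
`|α| = k` and `a_{α,α} ≠ 0`, then `L(P; z, (c_1 z_1,…,c_n z_n)) = 0` for every `z`. -/
theorem stmt5 {n k : ℕ}
    (J : Finset ((Fin n →₀ ℕ) × (Fin n →₀ ℕ)))
    (a : (Fin n →₀ ℕ) × (Fin n →₀ ℕ) → ℂ)
    (hdeg : ∀ p ∈ J, (∑ i, p.1 i) + (∑ i, p.2 i) = 2 * k)
    (hnp : ∀ p ∈ J, p.1 ≠ 0 ∧ p.2 ≠ 0)
    (hsym : ∀ p ∈ J, (p.2, p.1) ∈ J)
    (hherm : ∀ p : (Fin n →₀ ℕ) × (Fin n →₀ ℕ), a (p.2, p.1) = conj (a p))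
    (hpsh : ∀ z V : Fin n → ℂ, 0 ≤ (leviForm J a z V).re)
    (c : Fin n → ℂ)
    (hc : ∀ α : Fin n →₀ ℕ, (α, α) ∈ J → a (α, α) ≠ 0 → ∑ j, (α j : ℂ) * c j = 0) :
    ∀ z : Fin n → ℂ, leviForm J a z (fun i => c i * z i) = 0 := by
  intro z
  set N : ℕ := 2 * k + 1 with hNdef
  set ω : ℂ := Complex.exp (2 * ↑Real.pi * Complex.I / N) with hωdef
  have hprim : IsPrimitiveRoot ω N := Complex.isPrimitiveRoot_exp N (by omega)
  have hωN : ω ^ N = 1 := hprim.pow_eq_one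
  have hωc : conj ω = ω⁻¹ := by
    rw [hωdef, ← Complex.exp_conj, ← Complex.exp_neg]
    congr 1
    rw [map_div₀, map_mul, map_mul, Complex.conj_I, Complex.conj_natCast,
      Complex.conj_ofReal, map_ofNat]
    ring
  have hω0 : ω ≠ 0 := Complex.exp_ne_zero _
  -- the coefficients of the Levi form polynomial
  set b : (Fin n →₀ ℕ) × (Fin n →₀ ℕ) → ℂ :=
    fun p => a p * (∑ i, (p.1 i : ℂ) * c i) * conj (∑ j, (p.2 j : ℂ) * c j) with hbdef
  have hlev : ∀ w : Fin n → ℂ, leviForm J a w (fun i => c i * w i) = pval J b w :=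
    fun w => levi_eq J a c w
  -- diagonal coefficients vanish
  have hbd : ∀ p ∈ J, p.1 = p.2 → b p = 0 := by
    intro p hp hd
    by_cases ha : a p = 0
    · simp [hbdef, ha]
    · have hpe : p = (p.1, p.1) := by rw [Prod.ext_iff]; exact ⟨rfl, hd.symm⟩
      have h1 : (p.1, p.1) ∈ J := hpe ▸ hp
      have h2 : a (p.1, p.1) ≠ 0 := hpe ▸ ha
      have := hc p.1 h1 h2
      simp [hbdef, this]
  -- coordinate bounds
  have hbound : ∀ p ∈ J, ∀ j, p.1 j < N ∧ p.2 j < N := by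
    intro p hp j
    have h1 : p.1 j ≤ ∑ i, p.1 i :=
      Finset.single_le_sum (f := fun i => p.1 i) (fun i _ => Nat.zero_le _) (mem_univ j)
    have h2 : p.2 j ≤ ∑ i, p.2 i :=
      Finset.single_le_sum (f := fun i => p.2 i) (fun i _ => Nat.zero_le _) (mem_univ j)
    have := hdeg p hp
    omega
  -- the averaged sum vanishes
  have hsum : ∑ m ∈ Fintype.piFinset (fun _ : Fin n => range N),
      pval J b (fun j => ω ^ m j * z j) = 0 := by
    have hterm : ∀ m : Fin n → ℕ, pval J b (fun j => ω ^ m j * z j)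
        = ∑ p ∈ J, (b p * mpow z p.1 * conj (mpow z p.2)) *
            ∏ j, (ω ^ p.1 j * (conj ω) ^ p.2 j) ^ m j := by
      intro m
      unfold pval
      apply Finset.sum_congr rfl
      intro p _
      rw [mpow_scale, mpow_scale, map_mul, map_prod]
      simp only [map_pow]
      have hsplit : ∏ j, (ω ^ p.1 j * (conj ω) ^ p.2 j) ^ m j
          = (∏ j, (ω ^ p.1 j) ^ m j) * ∏ j, ((conj ω) ^ p.2 j) ^ m j := by
        rw [← Finset.prod_mul_distrib]
        exact Finset.prod_congr rfl fun j _ => mul_pow _ _ _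
      rw [hsplit]
      ring
    simp only [hterm]
    rw [Finset.sum_comm]
    apply Finset.sum_eq_zero
    intro p hp
    rw [← Finset.mul_sum, ← Finset.prod_univ_sum]
    by_cases hd : p.1 = p.2
    · rw [hbd p hp hd]; ring
    · have : ∃ j, p.1 j ≠ p.2 j := by
        by_contra h
        push_neg at h
        exact hd (Finsupp.ext h)
      obtain ⟨j0, hj0⟩ := this
      have hzero : ∑ t ∈ range N, (ω ^ p.1 j0 * (conj ω) ^ p.2 j0) ^ t = 0 := by
        apply geom_vanish
        · intro he
          rw [hωc, inv_pow, mul_inv_eq_one₀ (pow_ne_zero _ hω0)] at he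
          exact hj0 (hprim.pow_inj (hbound p hp j0).1 (hbound p hp j0).2 he)
        · rw [mul_pow, ← pow_mul, ← pow_mul, mul_comm (p.1 j0) N, mul_comm (p.2 j0) N,
            pow_mul, pow_mul, hωN, ← map_pow, hωN]
          simp
      rw [Finset.prod_eq_zero (mem_univ j0) hzero]
      ring
  -- nonnegativity of each term
  have hnn : ∀ m ∈ Fintype.piFinset (fun _ : Fin n => range N),
      0 ≤ (pval J b (fun j => ω ^ m j * z j)).re := by
    intro m _
    rw [← hlev]
    exact hpsh _ _
  -- each term has zero real part
  have hre0 : ∀ m ∈ Fintype.piFinset (fun _ : Fin n => range N),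
      (pval J b (fun j => ω ^ m j * z j)).re = 0 := by
    rw [← Finset.sum_eq_zero_iff_of_nonneg hnn]
    rw [← Complex.re_sum, hsum]
    rfl
  -- specialize to m = 0
  have hmem : (fun _ : Fin n => 0) ∈ Fintype.piFinset (fun _ : Fin n => range N) := by
    simp [Fintype.mem_piFinset, hNdef]
  have hre : (pval J b z).re = 0 := by
    have := hre0 _ hmem
    simpa using this
  -- reality
  have hbh : ∀ p, b (p.2, p.1) = conj (b p) := by
    intro p
    simp only [hbdef]
    rw [hherm p, map_mul, map_mul, Complex.conj_conj]
    ring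
  have hconj : conj (pval J b z) = pval J b z := pval_conj_self J b hsym hbh z
  have him : (pval J b z).im = 0 := Complex.conj_eq_iff_im.mp hconj
  have hzero : pval J b z = 0 := Complex.ext (by simp [hre]) (by simp [him])
  rw [hlev z, hzero]
end

section
/- Let P: C^n → R be a plurisubharmonic polynomial homogeneous of degree 2k, without pluriharmonic terms, written P(z) = Σ_{β: 1≤|β|≤2k−1} z̄^β P_β(z) where each P_β is the homogeneous holomorphic polynomial of degree 2k−|β| collecting the coefficients a_{α,β}. Suppose G: C^n → C^m (1 ≤ m ≤ n−1) is holomorphic, nonsingular on a nonempty open set U, and P is pluriharmonic along every level set of G|_U. Then for every multi-index β with 1 ≤ |β| ≤ 2k−1, every point z ∈ U, and every vector K in the null space of the Jacobian G'(z), one has Σ_{J=1}^n K_J·(∂P_β/∂z_J)(z) = 0. -/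
open Finset
open scoped ComplexConjugate

open Metric Complex Set Filter Topology

namespace Stmt10Aux

set_option maxHeartbeats 1000000 in
lemma key_est {f : ℂ → ℂ} (hf : Differentiable ℂ f) {M : ℝ}
    (hM : ∀ w ∈ sphere (0:ℂ) 1, ‖f w‖ ≤ M) {h : ℂ} (h0 : h ≠ 0) (hh : ‖h‖ < 1/2) :
    ‖h⁻¹ * (f h - f 0) - deriv f 0‖ ≤ 2 * M * ‖h‖ := by
  have hsph : ∀ z ∈ sphere (0:ℂ) 1, ‖z‖ = 1 := fun z hz => by
    simpa using hz
  have hzne : ∀ z ∈ sphere (0:ℂ) 1, z ≠ 0 := by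
    intro z hz e; have := hsph z hz; rw [e] at this; simp at this
  have hzh : ∀ z ∈ sphere (0:ℂ) 1, (1:ℝ)/2 ≤ ‖z - h‖ := by
    intro z hz
    have h1 := hsph z hz
    have h2 := norm_sub_norm_le z h
    rw [h1] at h2; linarith
  have hzhne : ∀ z ∈ sphere (0:ℂ) 1, z - h ≠ 0 := by
    intro z hz e
    have := hzh z hz; rw [e] at this; simp at this; linarith
  have hcf : Continuous f := hf.continuous
  have c1 : ContinuousOn (fun z : ℂ => (z - h)⁻¹ * f z) (sphere 0 1) :=
    (((continuous_id.sub continuous_const).continuousOn).inv₀ hzhne).mul hcf.continuousOn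
  have c2 : ContinuousOn (fun z : ℂ => (z - 0)⁻¹ * f z) (sphere 0 1) :=
    (((continuous_id.sub continuous_const).continuousOn).inv₀
      (fun z hz => by simpa using hzne z hz)).mul hcf.continuousOn
  have c3 : ContinuousOn (fun z : ℂ => ((z - 0)^2)⁻¹ * f z) (sphere 0 1) :=
    ((((continuous_id.sub continuous_const).pow 2).continuousOn).inv₀
      (fun z hz => by simpa using pow_ne_zero 2 (hzne z hz))).mul hcf.continuousOn
  have int1 : CircleIntegrable (fun z : ℂ => (z - h)⁻¹ * f z) 0 1 :=
    c1.circleIntegrable zero_le_one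
  have int2 : CircleIntegrable (fun z : ℂ => (z - 0)⁻¹ * f z) 0 1 :=
    c2.circleIntegrable zero_le_one
  have int3 : CircleIntegrable (fun z : ℂ => ((z - 0)^2)⁻¹ * f z) 0 1 :=
    c3.circleIntegrable zero_le_one
  have int12 : CircleIntegrable (fun z : ℂ => h⁻¹ * ((z - h)⁻¹ * f z - (z - 0)⁻¹ * f z)) 0 1 :=
    (((c1.sub c2).const_smul h⁻¹).circleIntegrable zero_le_one : _)
  have hball : h ∈ ball (0:ℂ) 1 := by
    simp only [mem_ball, dist_zero_right]; linarith
  have h0ball : (0:ℂ) ∈ ball (0:ℂ) 1 := by simp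
  have cif1 : (∮ z in C(0, 1), (z - h)⁻¹ * f z) = (2 * ↑Real.pi * I) * f h := by
    have := hf.differentiableOn.circleIntegral_sub_inv_smul hball
    simpa [smul_eq_mul] using this
  have cif0 : (∮ z in C(0, 1), (z - 0)⁻¹ * f z) = (2 * ↑Real.pi * I) * f 0 := by
    have := hf.differentiableOn.circleIntegral_sub_inv_smul h0ball
    simpa [smul_eq_mul] using this
  have hderiv : deriv f 0 = (2 * ↑Real.pi * I : ℂ)⁻¹ * ∮ z in C(0, 1), ((z - 0)^2)⁻¹ * f z := by
    rw [← cderiv_eq_deriv isOpen_univ hf.differentiableOn one_pos (subset_univ _)]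
    simp only [cderiv, smul_eq_mul]
  have h2pi : (2 * ↑Real.pi * I : ℂ) ≠ 0 := by
    simp [Real.pi_ne_zero, I_ne_zero]
  have key : h⁻¹ * (f h - f 0) - deriv f 0
      = (2 * ↑Real.pi * I : ℂ)⁻¹ * ∮ z in C(0, 1),
          (h⁻¹ * ((z - h)⁻¹ - (z - 0)⁻¹) - ((z - 0)^2)⁻¹) * f z := by
    have split : (∮ z in C(0, 1), (h⁻¹ * ((z - h)⁻¹ - (z - 0)⁻¹) - ((z - 0)^2)⁻¹) * f z)
        = h⁻¹ * ((∮ z in C(0,1), (z - h)⁻¹ * f z) - ∮ z in C(0,1), (z - 0)⁻¹ * f z)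
          - ∮ z in C(0,1), ((z - 0)^2)⁻¹ * f z := by
      rw [← circleIntegral.integral_sub int1 int2, ← circleIntegral.integral_const_mul,
        ← circleIntegral.integral_sub int12 int3]
      refine circleIntegral.integral_congr zero_le_one fun z hz => ?_
      ring
    rw [split, cif1, cif0, hderiv]
    field_simp
  rw [key]
  have hM0 : 0 ≤ M := le_trans (norm_nonneg _) (hM 1 (by simp))
  have hbound : ∀ z ∈ sphere (0:ℂ) 1,
      ‖(h⁻¹ * ((z - h)⁻¹ - (z - 0)⁻¹) - ((z - 0)^2)⁻¹) * f z‖ ≤ 2 * ‖h‖ * M := by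
    intro z hz
    have hz1 := hsph z hz
    have hne := hzne z hz
    have hne2 := hzhne z hz
    have kereq : h⁻¹ * ((z - h)⁻¹ - (z - 0)⁻¹) - ((z - 0)^2)⁻¹ = h * (z^2)⁻¹ * (z - h)⁻¹ := by
      field_simp
      ring
    rw [kereq, norm_mul]
    have h1 : ‖h * (z^2)⁻¹ * (z - h)⁻¹‖ ≤ 2 * ‖h‖ := by
      rw [norm_mul, norm_mul, norm_inv, norm_inv, norm_pow, hz1, one_pow, inv_one, mul_one]
      have h2 := hzh z hz
      have h3 : ‖z - h‖⁻¹ ≤ 2 := by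
        rw [inv_le_comm₀ (by linarith) (by norm_num)]
        linarith
      calc ‖h‖ * ‖z - h‖⁻¹ ≤ ‖h‖ * 2 := by
            exact mul_le_mul_of_nonneg_left h3 (norm_nonneg _)
        _ = 2 * ‖h‖ := by ring
    calc ‖h * (z^2)⁻¹ * (z - h)⁻¹‖ * ‖f z‖ ≤ (2 * ‖h‖) * M :=
          mul_le_mul h1 (hM z hz) (norm_nonneg _) (by positivity)
      _ = 2 * ‖h‖ * M := by ring
  have := circleIntegral.norm_integral_le_of_norm_le_const zero_le_one hbound
  rw [norm_mul, norm_inv]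
  have h2pin : ‖(2 * ↑Real.pi * I : ℂ)‖ = 2 * Real.pi := by
    simp [norm_mul, Complex.norm_I, Complex.norm_real, Real.norm_eq_abs,
      _root_.abs_of_nonneg Real.pi_nonneg]
  rw [h2pin]
  calc (2 * Real.pi)⁻¹ * ‖∮ z in C(0, 1), (h⁻¹ * ((z - h)⁻¹ - (z - 0)⁻¹) - ((z - 0)^2)⁻¹) * f z‖
      ≤ (2 * Real.pi)⁻¹ * (2 * Real.pi * 1 * (2 * ‖h‖ * M)) := by
        refine mul_le_mul_of_nonneg_left ?_ (by positivity)
        exact this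
    _ = 2 * M * ‖h‖ := by
        field_simp


set_option maxHeartbeats 1000000 in
lemma fderiv_line_diff {n : ℕ} {g : (Fin n → ℂ) → ℂ} (hg : Differentiable ℂ g)
    (c d v : Fin n → ℂ) :
    Differentiable ℂ fun t : ℂ => fderiv ℂ g (c + t • d) v := by
  set L : ℂ → ℂ := fun t => fderiv ℂ g (c + t • d) v with hL
  set f : ℂ → ℂ → ℂ := fun t ζ => g (c + t • d + ζ • v) with hfdef
  have haff : ∀ (w : Fin n → ℂ) (u : Fin n → ℂ), Differentiable ℂ (fun s : ℂ => w + s • u) :=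
    fun w u => (differentiable_id.smul_const u).const_add w
  have hf_t : ∀ t, Differentiable ℂ (f t) := fun t => hg.comp (haff _ v)
  have hq : ∀ h : ℂ, Differentiable ℂ (fun t => h⁻¹ * (f t h - f t 0)) := by
    intro h
    have h1 : Differentiable ℂ (fun t : ℂ => f t h) := by
      have he : (fun t : ℂ => f t h) = fun t => g ((c + h • v) + t • d) := by
        funext t; simp only [hfdef]; congr 1; module
      rw [he]; exact hg.comp (haff _ d)
    have h2 : Differentiable ℂ (fun t : ℂ => f t 0) := by
      have he : (fun t : ℂ => f t 0) = fun t => g (c + t • d) := by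
        funext t; simp only [hfdef, zero_smul, add_zero]
      rw [he]; exact hg.comp (haff _ d)
    exact (h1.sub h2).const_mul _
  have hline : ∀ t, HasDerivAt (f t) (L t) 0 := by
    intro t
    have hinner : HasDerivAt (fun ζ : ℂ => c + t • d + ζ • v) v 0 := by
      simpa using ((hasDerivAt_id (0:ℂ)).smul_const v).const_add (c + t • d)
    have := (hg (c + t • d + (0:ℂ) • v)).hasFDerivAt.comp_hasDerivAt 0 hinner
    simp only [zero_smul, add_zero] at this; exact this
  have hconv : TendstoLocallyUniformlyOn (fun (h : ℂ) (t : ℂ) => h⁻¹ * (f t h - f t 0)) L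
      (𝓝[≠] (0:ℂ)) univ := by
    rw [tendstoLocallyUniformlyOn_iff_forall_isCompact isOpen_univ]
    intro K _ hK
    have hφ : Continuous (fun p : ℂ × ℂ => g (c + p.1 • d + p.2 • v)) := by
      apply hg.continuous.comp
      exact (continuous_const.add (continuous_fst.smul continuous_const)).add
        (continuous_snd.smul continuous_const)
    obtain ⟨M, hM⟩ := (hK.prod (isCompact_sphere (0:ℂ) 1)).exists_bound_of_continuousOn
      hφ.continuousOn
    set M' := max M 0 with hM'def
    have hM'0 : 0 ≤ M' := le_max_right _ _
    rw [Metric.tendstoUniformlyOn_iff]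
    intro ε hε
    have hδpos : 0 < min (1/2 : ℝ) (ε / (2 * M' + 1)) := by
      refine lt_min (by norm_num) (div_pos hε (by linarith))
    have h1 : ∀ᶠ h in 𝓝[≠] (0:ℂ), h ≠ 0 := by
      filter_upwards [self_mem_nhdsWithin] with x hx
      simpa using hx
    have h2 : ∀ᶠ h in 𝓝[≠] (0:ℂ), ‖h‖ < min (1/2 : ℝ) (ε / (2 * M' + 1)) := by
      refine eventually_nhdsWithin_of_eventually_nhds ?_
      filter_upwards [Metric.ball_mem_nhds (0:ℂ) hδpos] with x hx
      simpa [mem_ball_zero_iff] using hx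
    filter_upwards [h1.and h2] with h hh t htK
    obtain ⟨h0, hsmall⟩ := hh
    have hMt : ∀ w ∈ sphere (0:ℂ) 1, ‖f t w‖ ≤ M' := fun w hw =>
      le_trans (hM (t, w) ⟨htK, hw⟩) (le_max_left _ _)
    have hest := key_est (hf_t t) hMt h0 (lt_of_lt_of_le hsmall (min_le_left _ _))
    rw [(hline t).deriv] at hest
    rw [dist_comm, dist_eq_norm]
    have hnormsmall : ‖h‖ * (2 * M' + 1) < ε := by
      have := lt_of_lt_of_le hsmall (min_le_right _ _)
      exact (lt_div_iff₀ (by linarith)).mp this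
    calc ‖h⁻¹ * (f t h - f t 0) - L t‖ ≤ 2 * M' * ‖h‖ := hest
      _ < ε := by nlinarith [norm_nonneg h]
  have hdiff : ∀ᶠ (h : ℂ) in 𝓝[≠] (0:ℂ),
      DifferentiableOn ℂ (fun t => h⁻¹ * (f t h - f t 0)) univ :=
    Eventually.of_forall fun h => (hq h).differentiableOn
  have := hconv.differentiableOn hdiff isOpen_univ
  rw [← differentiableOn_univ]
  exact this


lemma entire_zero_of_real_zero {g : ℂ → ℂ} (hg : Differentiable ℂ g) {r : ℝ} (hr : 0 < r)
    (h0 : ∀ ζ : ℂ, ζ.im = 0 → ‖ζ‖ < r → g ζ = 0) : ∀ ζ : ℂ, g ζ = 0 := by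
  have han : AnalyticOnNhd ℂ g univ := fun z _ => hg.analyticAt z
  have hfreq : ∃ᶠ z in 𝓝[≠] (0:ℂ), g z = 0 := by
    rw [Filter.frequently_iff]
    intro s hs
    rcases Metric.mem_nhdsWithin_iff.mp hs with ⟨ε, hε, hsub⟩
    set x : ℂ := ((min (ε/2) (r/2) : ℝ) : ℂ) with hxdef
    have hxpos : 0 < min (ε/2) (r/2) := lt_min (by linarith) (by linarith)
    have hxnorm : ‖x‖ = min (ε/2) (r/2) := by
      rw [hxdef, Complex.norm_real, Real.norm_eq_abs, abs_of_pos hxpos]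
    refine ⟨x, hsub ⟨?_, ?_⟩, ?_⟩
    · rw [mem_ball_zero_iff, hxnorm]
      exact lt_of_le_of_lt (min_le_left _ _) (by linarith)
    · simp only [mem_compl_iff, mem_singleton_iff]
      intro e
      rw [e] at hxnorm; simp at hxnorm; linarith
    · refine h0 x (by simp [hxdef]) ?_
      rw [hxnorm]
      exact lt_of_le_of_lt (min_le_right _ _) (by linarith)
  have := han.eqOn_zero_of_preconnected_of_frequently_eq_zero isPreconnected_univ
    (mem_univ 0) hfreq
  exact fun ζ => this (mem_univ ζ)

lemma polydisc_spread {N : ℕ} {F : (Fin N → ℂ) → ℂ}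
    (hsep : ∀ (w : Fin N → ℂ) (l : Fin N), Differentiable ℂ fun ζ => F (Function.update w l ζ))
    {r : ℝ} (hr : 0 < r)
    (h0 : ∀ w : Fin N → ℂ, (∀ i, ‖w i‖ < r) → (∀ i, (w i).im = 0) → F w = 0) :
    ∀ w : Fin N → ℂ, (∀ i, ‖w i‖ < r) → F w = 0 := by
  suffices H : ∀ t : ℕ, ∀ w : Fin N → ℂ, (∀ i, ‖w i‖ < r) →
      (∀ i : Fin N, t ≤ (i : ℕ) → (w i).im = 0) → F w = 0 by
    intro w hw
    exact H N w hw (fun i hi => absurd hi (by have := i.isLt; omega))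
  intro t
  induction t with
  | zero => exact fun w hw h => h0 w hw (fun i => h i (Nat.zero_le _))
  | succ t ih =>
    intro w hw h
    by_cases ht : t < N
    · set l : Fin N := ⟨t, ht⟩ with hldef
      have hzero : ∀ ζ : ℂ, ζ.im = 0 → ‖ζ‖ < r → F (Function.update w l ζ) = 0 := by
        intro ζ him hζ
        refine ih _ (fun i => ?_) (fun i hi => ?_)
        · rcases eq_or_ne i l with rfl | hne
          · rwa [Function.update_self]
          · rw [Function.update_of_ne hne]; exact hw i
        · rcases eq_or_ne i l with rfl | hne
          · rwa [Function.update_self]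
          · rw [Function.update_of_ne hne]
            refine h i ?_
            have : (i : ℕ) ≠ t := fun e => hne (Fin.ext e)
            omega
      have hall := entire_zero_of_real_zero (hsep w l) hr hzero
      have := hall (w l)
      rwa [Function.update_eq_self] at this
    · exact ih w hw (fun i hi => h i (by omega))

lemma conj_mpow {n : ℕ} (z : Fin n → ℂ) (δ : Fin n →₀ ℕ) :
    conj (mpow z δ) = mpow (star z) δ := by
  unfold mpow
  rw [map_prod]
  exact Finset.prod_congr rfl fun i _ => by rw [map_pow]; rfl

lemma mpow_line_diff {n : ℕ} (c d : Fin n → ℂ) (δ : Fin n →₀ ℕ) :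
    Differentiable ℂ fun t : ℂ => mpow (c + t • d) δ := by
  unfold mpow
  refine Differentiable.fun_finsetProd fun i _ => ?_
  have : (fun t : ℂ => (c + t • d) i ^ δ i) = fun t : ℂ => (c i + t * d i) ^ δ i := by
    funext t; simp
  rw [this]
  exact (differentiable_const _ |>.add (differentiable_id.mul_const _)).pow _

lemma psd_kernel {n : ℕ} {c : Fin n → Fin n → ℂ}
    (hherm : ∀ i j, conj (c i j) = c j i)
    (hpsd : ∀ V : Fin n → ℂ, 0 ≤ (∑ i, ∑ j, c i j * V i * conj (V j)).re)
    {V : Fin n → ℂ} (hV : ∑ i, ∑ j, c i j * V i * conj (V j) = 0) (W : Fin n → ℂ) :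
    ∑ i, ∑ j, c i j * V i * conj (W j) = 0 := by
  set Q : (Fin n → ℂ) → (Fin n → ℂ) → ℂ := fun X Y => ∑ i, ∑ j, c i j * X i * conj (Y j)
    with hQdef
  have hexp : ∀ t : ℂ, Q (V + t • W) (V + t • W)
      = Q V V + conj t * Q V W + t * Q W V + (t * conj t) * Q W W := by
    intro t
    simp only [hQdef, Finset.mul_sum, ← Finset.sum_add_distrib]
    refine Finset.sum_congr rfl fun i _ => ?_
    refine Finset.sum_congr rfl fun j _ => ?_
    simp only [Pi.add_apply, Pi.smul_apply, smul_eq_mul, map_add, map_mul]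
    ring
  have hQconj : conj (Q W V) = Q V W := by
    simp only [hQdef, map_sum, map_mul]
    rw [Finset.sum_comm]
    refine Finset.sum_congr rfl fun i _ => Finset.sum_congr rfl fun j _ => ?_
    rw [hherm j i]
    simp only [Complex.conj_conj]
    ring
  set q := Q W V with hqdef
  have hineq : ∀ s : ℝ, 0 < s →
      0 ≤ -2 * s * Complex.normSq q + s^2 * Complex.normSq q * (Q W W).re := by
    intro s hs
    have h1 : 0 ≤ (Q (V + (-(s:ℝ) * conj q) • W) (V + (-(s:ℝ) * conj q) • W)).re :=
      hpsd (V + (-(s:ℝ) * conj q) • W)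
    have hVQ : Q V V = 0 := hV
    rw [hexp (-(s:ℝ) * conj q), hVQ] at h1
    have e1 : (conj (-(s:ℝ) * conj q) * Q V W + -(s:ℝ) * conj q * q : ℂ)
        = ((-2 * s * Complex.normSq q : ℝ) : ℂ) := by
      rw [← hQconj]
      simp only [map_mul, map_neg, Complex.conj_conj, Complex.conj_ofReal]
      push_cast
      linear_combination (-2*(s:ℂ)) * Complex.mul_conj q
    have e2 : ((-(s:ℝ) * conj q) * conj (-(s:ℝ) * conj q) : ℂ)
        = ((s^2 * Complex.normSq q : ℝ) : ℂ) := by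
      simp only [map_mul, map_neg, Complex.conj_conj, Complex.conj_ofReal]
      push_cast
      linear_combination ((s:ℂ))^2 * Complex.mul_conj q
    rw [zero_add] at h1
    rw [e1, e2] at h1
    simp only [Complex.add_re, Complex.ofReal_re, Complex.re_ofReal_mul] at h1
    linarith
  have hq0 : q = 0 := by
    by_contra hne
    have hN : 0 < Complex.normSq q := by
      rcases lt_or_eq_of_le (Complex.normSq_nonneg q) with h | h
      · exact h
      · exact absurd (Complex.normSq_eq_zero.mp h.symm) hne
    set r := (Q W W).re with hrdef
    set s := 1 / (|r| + 1) with hsdef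
    have hs : 0 < s := by positivity
    have := hineq s hs
    have hsr : s * r ≤ s * |r| := mul_le_mul_of_nonneg_left (le_abs_self r) hs.le
    have hsabs : s * (|r| + 1) = 1 := by
      rw [hsdef]; field_simp
    have hsN : 0 < s * Complex.normSq q := mul_pos hs hN
    have h3 : s * r ≤ 1 - s := by nlinarith
    have h4 : s^2 * Complex.normSq q * r ≤ (s * Complex.normSq q) * (1 - s) := by
      have := mul_le_mul_of_nonneg_left h3 hsN.le
      nlinarith
    nlinarith
  show Q V W = 0
  rw [← hQconj, hq0]
  simp


lemma det_line_diff {m : ℕ} {M : ℂ → Matrix (Fin m) (Fin m) ℂ}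
    (h : ∀ b b', Differentiable ℂ fun t => M t b b') :
    Differentiable ℂ fun t => (M t).det := by
  simp only [Matrix.det_apply]
  refine Differentiable.fun_sum fun σ _ => ?_
  simp only [Units.smul_def, zsmul_eq_mul]
  exact (Differentiable.fun_finsetProd fun i _ => h _ _).const_mul _

set_option maxHeartbeats 1000000 in
lemma kernel_field {n m : ℕ} {G : (Fin n → ℂ) → (Fin m → ℂ)} (hG : Differentiable ℂ G)
    {z₀ : Fin n → ℂ} (hsurj : Function.Surjective (fderiv ℂ G z₀))
    {K₀ : Fin n → ℂ} (hK₀ : fderiv ℂ G z₀ K₀ = 0) :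
    ∃ K : (Fin n → ℂ) → (Fin n → ℂ),
      K z₀ = K₀ ∧ (∀ u, fderiv ℂ G u (K u) = 0) ∧
      (∀ (c d : Fin n → ℂ) (i : Fin n), Differentiable ℂ fun t : ℂ => K (c + t • d) i) := by
  classical
  set A : (Fin n → ℂ) → Matrix (Fin m) (Fin n) ℂ :=
    fun u => Matrix.of fun b i => fderiv ℂ G u (Pi.single i 1) b with hAdef
  have hAmul : ∀ u (V : Fin n → ℂ), fderiv ℂ G u V = (A u).mulVec V := by
    intro u V
    have hVexp : V = ∑ i, V i • (Pi.single i 1 : Fin n → ℂ) := by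
      funext j
      rw [Finset.sum_apply]
      simp [Pi.single_apply, Finset.sum_ite_eq']
    funext b
    conv_lhs => rw [hVexp]
    rw [map_sum]
    rw [Finset.sum_apply]
    simp only [map_smul]
    rw [Matrix.mulVec]
    simp only [dotProduct, hAdef, Matrix.of_apply, Pi.smul_apply, smul_eq_mul]
    exact Finset.sum_congr rfl fun i _ => mul_comm _ _
  have hAdiff : ∀ (c d : Fin n → ℂ) (b : Fin m) (i : Fin n), Differentiable ℂ fun t : ℂ => A (c + t • d) b i := by
    intro c d b i
    have hcomp : ∀ u v, fderiv ℂ G u v b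
        = fderiv ℂ (fun w => (ContinuousLinearMap.proj (R := ℂ) (φ := fun _ : Fin m => ℂ) b)
            (G w)) u v := by
      intro u v
      rw [show (fun w => (ContinuousLinearMap.proj (R := ℂ) (φ := fun _ : Fin m => ℂ) b) (G w))
            = (ContinuousLinearMap.proj (R := ℂ) (φ := fun _ : Fin m => ℂ) b) ∘ G from rfl]
      rw [fderiv_comp u ((ContinuousLinearMap.proj b).differentiableAt) (hG u)]
      simp [ContinuousLinearMap.fderiv]
    have := fderiv_line_diff (n := n)
      (g := fun w => (ContinuousLinearMap.proj (R := ℂ) (φ := fun _ : Fin m => ℂ) b) (G w))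
      ((ContinuousLinearMap.proj (R := ℂ) (φ := fun _ : Fin m => ℂ) b).differentiable.comp hG)
      c d (Pi.single i 1)
    have he : (fun t : ℂ => A (c + t • d) b i)
        = fun t : ℂ => fderiv ℂ (fun w => (ContinuousLinearMap.proj (R := ℂ)
            (φ := fun _ : Fin m => ℂ) b) (G w)) (c + t • d) (Pi.single i 1) := by
      funext t
      rw [hAdef]
      simp only [Matrix.of_apply]
      rw [hcomp]
    rw [he]
    exact this
  -- right inverse
  obtain ⟨ρ, hρ⟩ := (fderiv ℂ G z₀ : (Fin n → ℂ) →ₗ[ℂ] (Fin m → ℂ)).exists_rightInverse_of_surjective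
    (LinearMap.range_eq_top.2 hsurj)
  have hρap : ∀ x, fderiv ℂ G z₀ (ρ x) = x := fun x => by
    have := LinearMap.congr_fun hρ x
    simpa using this
  set C : Matrix (Fin n) (Fin m) ℂ := Matrix.of fun i b => ρ (Pi.single b 1) i with hCdef
  have hMC : A z₀ * C = 1 := by
    ext b b'
    rw [Matrix.mul_apply]
    have h1 : fderiv ℂ G z₀ (ρ (Pi.single b' 1)) b = (A z₀).mulVec (ρ (Pi.single b' 1)) b := by
      rw [hAmul]
    rw [hρap] at h1
    rw [Matrix.mulVec, dotProduct] at h1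
    rw [show ∑ j, A z₀ b j * C j b' = ∑ j, A z₀ b j * ρ (Pi.single b' 1) j from rfl, ← h1]
    simp [Pi.single_apply, Matrix.one_apply, eq_comm]
  set K : (Fin n → ℂ) → (Fin n → ℂ) :=
    fun u => (A u * C).det • K₀ - C.mulVec ((A u * C).adjugate.mulVec ((A u).mulVec K₀))
    with hKdef
  have hker : ∀ u, (A u).mulVec (K u) = 0 := by
    intro u
    rw [hKdef]
    simp only [Matrix.mulVec_sub, Matrix.mulVec_smul]
    rw [Matrix.mulVec_mulVec, Matrix.mulVec_mulVec, Matrix.mul_adjugate,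
      Matrix.smul_mulVec, Matrix.one_mulVec, sub_self]
  refine ⟨K, ?_, ?_, ?_⟩
  · rw [hKdef]
    have h0 : (A z₀).mulVec K₀ = 0 := by rw [← hAmul]; exact hK₀
    simp [h0, hMC, Matrix.mulVec_zero]
  · intro u
    rw [hAmul]
    exact hker u
  · intro c d i
    rw [hKdef]
    simp only [Pi.sub_apply, Pi.smul_apply, smul_eq_mul]
    have hMdiff : ∀ b b', Differentiable ℂ fun t : ℂ => (A (c + t • d) * C) b b' := by
      intro b b'
      simp only [Matrix.mul_apply]
      exact Differentiable.fun_sum fun j _ => (hAdiff c d b j).mul_const _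
    refine Differentiable.sub ((det_line_diff hMdiff).mul_const _) ?_
    simp only [Matrix.mulVec, dotProduct]
    refine Differentiable.fun_sum fun b _ => Differentiable.const_mul ?_ _
    refine Differentiable.fun_sum fun b' _ => Differentiable.mul ?_ ?_
    · -- adjugate entry
      simp only [Matrix.adjugate_apply]
      refine det_line_diff ?_
      intro x y
      simp only [Matrix.updateRow_apply]
      by_cases hxy : x = b'
      · simp [hxy]
      · simp only [hxy, if_false]
        exact hMdiff x y
    · exact Differentiable.fun_sum fun j _ => (hAdiff c d b' j).mul_const _


noncomputable def hess {n : ℕ} (J : Finset ((Fin n →₀ ℕ) × (Fin n →₀ ℕ)))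
    (a : (Fin n →₀ ℕ) × (Fin n →₀ ℕ) → ℂ) (z : Fin n → ℂ) (i j : Fin n) : ℂ :=
  ∑ p ∈ J, a p * (p.1 i : ℂ) * (p.2 j : ℂ) * mpow z (p.1 - Finsupp.single i 1) *
    conj (mpow z (p.2 - Finsupp.single j 1))

lemma triple_swap {α : Type*} {nn : ℕ} (J : Finset α) (f : α → Fin nn → Fin nn → ℂ) :
    ∑ p ∈ J, ∑ i, ∑ j, f p i j = ∑ i, ∑ j, ∑ p ∈ J, f p i j := by
  rw [Finset.sum_comm]
  exact Finset.sum_congr rfl fun i _ => Finset.sum_comm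

lemma leviForm_eq_hess {n : ℕ} (J : Finset ((Fin n →₀ ℕ) × (Fin n →₀ ℕ)))
    (a : (Fin n →₀ ℕ) × (Fin n →₀ ℕ) → ℂ) (z V : Fin n → ℂ) :
    leviForm J a z V = ∑ i, ∑ j, hess J a z i j * V i * conj (V j) := by
  unfold leviForm hess
  simp only [Finset.mul_sum, Finset.sum_mul]
  rw [triple_swap]
  refine Finset.sum_congr rfl fun i _ => Finset.sum_congr rfl fun j _ =>
    Finset.sum_congr rfl fun p _ => ?_
  ring

lemma hess_herm {n : ℕ} (J : Finset ((Fin n →₀ ℕ) × (Fin n →₀ ℕ)))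
    (a : (Fin n →₀ ℕ) × (Fin n →₀ ℕ) → ℂ)
    (hsym : ∀ p ∈ J, (p.2, p.1) ∈ J)
    (hherm : ∀ p : (Fin n →₀ ℕ) × (Fin n →₀ ℕ), a (p.2, p.1) = conj (a p))
    (z : Fin n → ℂ) (i j : Fin n) :
    conj (hess J a z i j) = hess J a z j i := by
  unfold hess
  rw [map_sum]
  refine Finset.sum_nbij' (fun p => (p.2, p.1)) (fun p => (p.2, p.1))
    (fun p hp => hsym p hp) (fun p hp => hsym p hp) (fun p _ => rfl) (fun p _ => rfl) ?_
  intro p hp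
  simp only [map_mul, Complex.conj_conj, map_natCast]
  have : conj (a p) = a (p.2, p.1) := (hherm p).symm
  rw [this]
  ring


end Stmt10Aux

open Stmt10Aux

set_option maxHeartbeats 2000000 in
/-- with `P(z) = ∑_{β} z̄^β P_β(z)` a plurisubharmonic polynomial,
homogeneous of degree `2k`, without pluriharmonic terms, and `G : ℂⁿ → ℂᵐ`
(`1 ≤ m ≤ n−1`) holomorphic, nonsingular on a nonempty open `U`, with `P` pluriharmonic
along every level set of `G|_U`: for every `β` with `1 ≤ |β| ≤ 2k−1`, every `z ∈ U` and
every `K` in the kernel of the Jacobian `G'(z)`, one has `∑_J K_J ∂P_β/∂z_J(z) = 0`. -/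
theorem stmt10 {n m k : ℕ} (hm1 : 1 ≤ m) (hmn : m ≤ n - 1)
    (J : Finset ((Fin n →₀ ℕ) × (Fin n →₀ ℕ)))
    (a : (Fin n →₀ ℕ) × (Fin n →₀ ℕ) → ℂ)
    (hdeg : ∀ p ∈ J, (∑ i, p.1 i) + (∑ i, p.2 i) = 2 * k)
    (hnp : ∀ p ∈ J, p.1 ≠ 0 ∧ p.2 ≠ 0)
    (hsym : ∀ p ∈ J, (p.2, p.1) ∈ J)
    (hherm : ∀ p : (Fin n →₀ ℕ) × (Fin n →₀ ℕ), a (p.2, p.1) = conj (a p))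
    (hpsh : ∀ z V : Fin n → ℂ, 0 ≤ (leviForm J a z V).re)
    (G : (Fin n → ℂ) → (Fin m → ℂ)) (hG : Differentiable ℂ G)
    (U : Set (Fin n → ℂ)) (hUo : IsOpen U) (hUne : U.Nonempty)
    (hns : ∀ z ∈ U, Function.Surjective (fderiv ℂ G z))
    (hph : ∀ z ∈ U, ∀ V : Fin n → ℂ, fderiv ℂ G z V = 0 → leviForm J a z V = 0) :
    ∀ β : Fin n →₀ ℕ, 1 ≤ ∑ i, β i → ∑ i, β i ≤ 2 * k - 1 →
      ∀ z ∈ U, ∀ K : Fin n → ℂ, fderiv ℂ G z K = 0 →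
        ∑ p ∈ J.filter (fun p => p.2 = β), a p *
          ∑ i, K i * (p.1 i : ℂ) * mpow z (p.1 - Finsupp.single i 1) = 0 := by
  classical
  intro β hβ1 _hβ2 z₀ hz₀ K₀ hK₀
  obtain ⟨j, hj⟩ : ∃ j, β j ≠ 0 := by
    by_contra h
    push_neg at h
    simp only [h, Finset.sum_const_zero] at hβ1
    omega
  obtain ⟨K, hKz₀, hKker, hKdiff⟩ := kernel_field hG (hns z₀ hz₀) hK₀
  obtain ⟨r, hr, hball⟩ := Metric.isOpen_iff.mp hUo z₀ hz₀
  set E : (Fin n → ℂ) → ((Fin n →₀ ℕ) × (Fin n →₀ ℕ)) → ℂ :=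
    fun u p => ∑ i, K u i * (p.1 i : ℂ) * mpow u (p.1 - Finsupp.single i 1) with hEdef
  set Ψ : (Fin n → ℂ) → (Fin n → ℂ) → ℂ :=
    fun u v => ∑ p ∈ J, a p * (p.2 j : ℂ) * mpow v (p.2 - Finsupp.single j 1) * E u p
    with hΨdef
  -- Step 1: the relation on the ball
  have hrel : ∀ u ∈ Metric.ball z₀ r, Ψ u (star u) = 0 := by
    intro u hu
    have h1 : leviForm J a u (K u) = 0 := hph u (hball hu) (K u) (hKker u)
    rw [leviForm_eq_hess] at h1
    have hker := psd_kernel (hess_herm J a hsym hherm u)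
      (fun V => by have := hpsh u V; rwa [leviForm_eq_hess] at this) h1
      (Pi.single j 1)
    -- collapse the j'-sum
    have hcollapse : ∑ i, hess J a u i j * K u i = 0 := by
      rw [← hker]
      refine Finset.sum_congr rfl fun i _ => ?_
      rw [Finset.sum_eq_single j]
      · simp
      · intro j' _ hj'
        simp [Pi.single_apply, hj']
      · intro hnotmem
        exact absurd (Finset.mem_univ j) hnotmem
    rw [← hcollapse]
    simp only [hΨdef, hEdef, hess]
    simp only [Finset.mul_sum, Finset.sum_mul]
    rw [Finset.sum_comm]
    refine Finset.sum_congr rfl fun i _ => Finset.sum_congr rfl fun p _ => ?_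
    rw [← conj_mpow]
    ring
  -- slice differentiability of Ψ
  have hΨslice : ∀ c₁ d₁ c₂ d₂ : Fin n → ℂ,
      Differentiable ℂ fun t : ℂ => Ψ (c₁ + t • d₁) (c₂ + t • d₂) := by
    intro c₁ d₁ c₂ d₂
    simp only [hΨdef, hEdef]
    refine Differentiable.fun_sum fun p _ => ?_
    refine Differentiable.mul ?_ ?_
    · exact ((mpow_line_diff c₂ d₂ _).const_mul _)
    · refine Differentiable.fun_sum fun i _ => ?_
      exact (((hKdiff c₁ d₁ i).mul_const _).mul (mpow_line_diff c₁ d₁ _))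
  -- Step 2: spreading to complex polydisc
  set r4 := r / 4 with hr4def
  have hr4 : 0 < r4 := by rw [hr4def]; linarith
  have hF0 : ∀ p q : Fin n → ℂ, (∀ i, ‖p i‖ < r4) → (∀ i, ‖q i‖ < r4) →
      Ψ (z₀ + p + Complex.I • q) (star z₀ + p - Complex.I • q) = 0 := by
    -- first spread in q for fixed real p? no: first fix real q, spread in p; then spread in q.
    have step1 : ∀ q : Fin n → ℂ, (∀ i, ‖q i‖ < r4) → (∀ i, (q i).im = 0) →
        ∀ p : Fin n → ℂ, (∀ i, ‖p i‖ < r4) →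
          Ψ (z₀ + p + Complex.I • q) (star z₀ + p - Complex.I • q) = 0 := by
      intro q hqn hqim
      refine polydisc_spread (F := fun p => Ψ (z₀ + p + Complex.I • q)
        (star z₀ + p - Complex.I • q)) ?_ hr4 ?_
      · intro w l
        have he : (fun ζ : ℂ => Ψ (z₀ + Function.update w l ζ + Complex.I • q)
              (star z₀ + Function.update w l ζ - Complex.I • q))
            = fun ζ : ℂ => Ψ ((z₀ + Function.update w l 0 + Complex.I • q)
                + ζ • (Pi.single l 1 : Fin n → ℂ))
              ((star z₀ + Function.update w l 0 - Complex.I • q)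
                + ζ • (Pi.single l 1 : Fin n → ℂ)) := by
          funext ζ
          congr 1 <;> funext i <;> by_cases hi : i = l <;>
            simp [Function.update_apply, Pi.single_apply, hi] <;> ring
        rw [he]
        exact hΨslice _ _ _ _
      · intro p hpn hpim
        have hstar : star (z₀ + p + Complex.I • q) = star z₀ + p - Complex.I • q := by
          funext i
          simp only [Pi.star_apply, Pi.add_apply, Pi.sub_apply, Pi.smul_apply, smul_eq_mul,
            star_add, RCLike.star_def]
          rw [map_mul]
          rw [Complex.conj_eq_iff_im.mpr (hpim i), Complex.conj_eq_iff_im.mpr (hqim i)]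
          simp [Complex.conj_I]
          ring
        have hmem : z₀ + p + Complex.I • q ∈ Metric.ball z₀ r := by
          rw [Metric.mem_ball, dist_pi_lt_iff hr]
          intro i
          simp only [Pi.add_apply, Pi.smul_apply, smul_eq_mul]
          rw [dist_eq_norm]
          have : z₀ i + p i + Complex.I * q i - z₀ i = p i + Complex.I * q i := by ring
          rw [this]
          calc ‖p i + Complex.I * q i‖ ≤ ‖p i‖ + ‖Complex.I * q i‖ := norm_add_le _ _
            _ = ‖p i‖ + ‖q i‖ := by rw [norm_mul, Complex.norm_I, one_mul]
            _ < r4 + r4 := add_lt_add (hpn i) (hqn i)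
            _ < r := by rw [hr4def]; linarith
        show Ψ (z₀ + p + Complex.I • q) (star z₀ + p - Complex.I • q) = 0
        rw [← hstar]
        exact hrel _ hmem
    intro p q hpn hqn
    refine polydisc_spread (F := fun q => Ψ (z₀ + p + Complex.I • q)
      (star z₀ + p - Complex.I • q)) ?_ hr4 ?_ q hqn
    · intro w l
      have he : (fun ζ : ℂ => Ψ (z₀ + p + Complex.I • Function.update w l ζ)
            (star z₀ + p - Complex.I • Function.update w l ζ))
          = fun ζ : ℂ => Ψ ((z₀ + p + Complex.I • Function.update w l 0)
              + ζ • (Complex.I • (Pi.single l 1 : Fin n → ℂ)))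
            ((star z₀ + p - Complex.I • Function.update w l 0)
              + ζ • (-(Complex.I • (Pi.single l 1 : Fin n → ℂ)))) := by
        funext ζ
        congr 1 <;> funext i <;> by_cases hi : i = l <;>
          simp [Function.update_apply, Pi.single_apply, hi] <;> ring
      rw [he]
      exact hΨslice _ _ _ _
    · intro q' hq'n hq'im
      exact step1 q' hq'n hq'im p hpn
  -- Step 3: Ψ z₀ v = 0 for v in a polydisc around star z₀
  have hΨz₀ : ∀ v : Fin n → ℂ, (∀ i, ‖v i - star z₀ i‖ < r4) → Ψ z₀ v = 0 := by
    intro v hv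
    set p : Fin n → ℂ := (1/2 : ℂ) • (v - star z₀) with hpdef
    set q : Fin n → ℂ := (Complex.I/2) • (v - star z₀) with hqdef
    have h1 : z₀ + p + Complex.I • q = z₀ := by
      funext i
      simp only [hpdef, hqdef, Pi.add_apply, Pi.smul_apply, Pi.sub_apply, smul_eq_mul]
      have : Complex.I * (Complex.I/2 * (v i - star z₀ i)) = -(1/2) * (v i - star z₀ i) := by
        rw [← mul_assoc]
        rw [show Complex.I * (Complex.I/2) = -(1/2 : ℂ) by
          rw [mul_div_assoc']
          rw [Complex.I_mul_I]
          ring]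
      rw [this]
      ring
    have h2 : star z₀ + p - Complex.I • q = v := by
      funext i
      simp only [hpdef, hqdef, Pi.add_apply, Pi.sub_apply, Pi.smul_apply, smul_eq_mul]
      have : Complex.I * (Complex.I/2 * (v i - star z₀ i)) = -(1/2) * (v i - star z₀ i) := by
        rw [← mul_assoc]
        rw [show Complex.I * (Complex.I/2) = -(1/2 : ℂ) by
          rw [mul_div_assoc']
          rw [Complex.I_mul_I]
          ring]
      rw [this]
      ring
    have := hF0 p q
      (fun i => by
        simp only [hpdef, Pi.smul_apply, Pi.sub_apply, smul_eq_mul, norm_mul]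
        have : ‖(1/2 : ℂ)‖ = 1/2 := by norm_num
        rw [this]
        have := hv i
        linarith [norm_nonneg (v i - star z₀ i), hv i])
      (fun i => by
        simp only [hqdef, Pi.smul_apply, Pi.sub_apply, smul_eq_mul, norm_mul]
        have : ‖(Complex.I/2 : ℂ)‖ = 1/2 := by
          rw [norm_div, Complex.norm_I]
          norm_num
        rw [this]
        linarith [norm_nonneg (v i - star z₀ i), hv i])
    rwa [h1, h2] at this
  -- Step 4: Ψ z₀ v = 0 for all v, by the one-variable identity theorem along lines
  have hΨall : ∀ v : Fin n → ℂ, Ψ z₀ v = 0 := by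
    intro v
    set c : Fin n → ℂ := star z₀ with hcdef
    set B : ℝ := ∑ i, ‖v i - c i‖ with hBdef
    have hB0 : 0 ≤ B := Finset.sum_nonneg fun i _ => norm_nonneg _
    have hBi : ∀ i, ‖v i - c i‖ ≤ B :=
      fun i => Finset.single_le_sum (f := fun i => ‖v i - c i‖)
        (fun i _ => norm_nonneg _) (Finset.mem_univ i)
    have hg : Differentiable ℂ fun t : ℂ => Ψ z₀ (c + t • (v - c)) := by
      have he : (fun t : ℂ => Ψ z₀ (c + t • (v - c)))
          = fun t : ℂ => Ψ (z₀ + t • (0 : Fin n → ℂ)) (c + t • (v - c)) := by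
        funext t; simp
      rw [he]
      exact hΨslice _ _ _ _
    have hzero := entire_zero_of_real_zero hg (r := r4 / (B + 1))
      (by positivity) ?_ 1
    · rwa [one_smul, hcdef, add_sub_cancel] at hzero
    · intro ζ _ hζ
      refine hΨz₀ _ fun i => ?_
      simp only [Pi.add_apply, Pi.smul_apply, Pi.sub_apply, smul_eq_mul]
      have : c i + ζ * (v i - c i) - star z₀ i = ζ * (v i - c i) := by
        rw [hcdef]; ring
      rw [this, norm_mul]
      calc ‖ζ‖ * ‖v i - c i‖ ≤ ‖ζ‖ * (B + 1) :=
            mul_le_mul_of_nonneg_left (le_trans (hBi i) (by linarith)) (norm_nonneg _)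
        _ < (r4 / (B + 1)) * (B + 1) := mul_lt_mul_of_pos_right hζ (by linarith)
        _ = r4 := by field_simp
  -- Step 5: polynomial coefficient extraction
  set P : MvPolynomial (Fin n) ℂ :=
    ∑ p ∈ J, MvPolynomial.monomial (p.2 - Finsupp.single j 1) (a p * (p.2 j : ℂ) * E z₀ p)
    with hPdef
  have hPeval : ∀ v : Fin n → ℂ, MvPolynomial.eval v P = Ψ z₀ v := by
    intro v
    rw [hPdef, map_sum]
    refine Finset.sum_congr rfl fun p _ => ?_
    rw [MvPolynomial.eval_monomial, Finsupp.prod_pow]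
    show _ = a p * (p.2 j : ℂ) * mpow v (p.2 - Finsupp.single j 1) * E z₀ p
    unfold mpow
    ring
  have hP0 : P = 0 := by
    refine MvPolynomial.funext fun v => ?_
    rw [hPeval, hΨall v, map_zero]
  have hcoeff := congrArg (MvPolynomial.coeff (β - Finsupp.single j 1)) hP0
  rw [hPdef, MvPolynomial.coeff_sum] at hcoeff
  simp only [MvPolynomial.coeff_monomial, MvPolynomial.coeff_zero] at hcoeff
  have hmain : (β j : ℂ) * ∑ p ∈ J.filter (fun p => p.2 = β), a p * E z₀ p = 0 := by
    have hterm : (∑ p ∈ J, if (p.2 - Finsupp.single j 1) = β - Finsupp.single j 1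
          then a p * (p.2 j : ℂ) * E z₀ p else 0)
        = ∑ p ∈ J, if p.2 = β then (β j : ℂ) * (a p * E z₀ p) else 0 := by
      refine Finset.sum_congr rfl fun p _ => ?_
      by_cases h2 : p.2 = β
      · rw [if_pos (by rw [h2]), if_pos h2, h2]
        ring
      · rw [if_neg h2]
        by_cases h3 : p.2 - Finsupp.single j 1 = β - Finsupp.single j 1
        · rw [if_pos h3]
          by_cases h4 : p.2 j = 0
          · rw [h4]
            push_cast
            ring
          · exfalso
            apply h2
            have e1 : Finsupp.single j 1 ≤ p.2 := Finsupp.single_le_iff.mpr (by omega)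
            have e2 : Finsupp.single j 1 ≤ β := Finsupp.single_le_iff.mpr (by omega)
            calc p.2 = p.2 - Finsupp.single j 1 + Finsupp.single j 1 :=
                  (tsub_add_cancel_of_le e1).symm
              _ = β - Finsupp.single j 1 + Finsupp.single j 1 := by rw [h3]
              _ = β := tsub_add_cancel_of_le e2
        · rw [if_neg h3]
    rw [Finset.mul_sum, Finset.sum_filter, ← hterm, hcoeff]
  have hβj : (β j : ℂ) ≠ 0 := Nat.cast_ne_zero.mpr hj
  rcases mul_eq_zero.mp hmain with h | h
  · exact absurd h hβj
  · have he : ∑ p ∈ J.filter (fun p => p.2 = β),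
        a p * ∑ i, K₀ i * (p.1 i : ℂ) * mpow z₀ (p.1 - Finsupp.single i 1)
        = ∑ p ∈ J.filter (fun p => p.2 = β), a p * E z₀ p := by
      refine Finset.sum_congr rfl fun p _ => ?_
      simp only [hEdef, hKz₀]
    rw [he, h]
end

section
/- Let P: C^n → R, n ≥ 2, be a non-constant homogeneous plurisubharmonic polynomial without pluriharmonic terms, homogeneous of degree 2d_j in the pair (z_j, z̄_j) for each j = 1,...,n, with d_j ∈ Z_{>0}. Let d = gcd(d_1,...,d_n). Then there exists a homogeneous subharmonic polynomial s: C → R without harmonic terms such that P(z_1,...,z_n) = s(z_1^{d_1/d}···z_n^{d_n/d}) for all (z_1,...,z_n) ∈ C^n. -/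
open Finset
open scoped ComplexConjugate

namespace Stmt12

open Complex

variable {n : ℕ}

lemma mpow_coeff_mul (z : Fin n → ℂ) (α : Fin n →₀ ℕ) (i : Fin n) :
    (α i : ℂ) * (mpow z (α - Finsupp.single i 1) * z i) = (α i : ℂ) * mpow z α := by
  rcases Nat.eq_zero_or_pos (α i) with h | h
  · simp [h]
  · have e1 : mpow z α = z i ^ α i * ∏ l ∈ Finset.univ.erase i, z l ^ α l :=
      (Finset.mul_prod_erase _ _ (Finset.mem_univ i)).symm
    have e2 : mpow z (α - Finsupp.single i 1)
        = z i ^ (α i - 1) * ∏ l ∈ Finset.univ.erase i, z l ^ α l := by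
      rw [mpow, ← Finset.mul_prod_erase _ _ (Finset.mem_univ i)]
      congr 1
      · congr 1
        rw [Finsupp.tsub_apply, Finsupp.single_apply, if_pos rfl]
      · refine Finset.prod_congr rfl fun l hl => ?_
        congr 1
        rw [Finsupp.tsub_apply, Finsupp.single_apply,
          if_neg (Finset.ne_of_mem_erase hl).symm, Nat.sub_zero]
    have hz : z i ^ (α i - 1) * z i = z i ^ α i := by
      rw [← pow_succ, Nat.sub_add_cancel h]
    rw [e1, e2]
    linear_combination (α i : ℂ) * (∏ l ∈ Finset.univ.erase i, z l ^ α l) * hz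

lemma leviForm_mu (J : Finset ((Fin n →₀ ℕ) × (Fin n →₀ ℕ)))
    (a : (Fin n →₀ ℕ) × (Fin n →₀ ℕ) → ℂ) (z μ : Fin n → ℂ) :
    leviForm J a z (fun l => μ l * z l) =
      ∑ p ∈ J, a p * (mpow z p.1 * conj (mpow z p.2)) *
        ((∑ i, (p.1 i : ℂ) * μ i) * conj (∑ i, (p.2 i : ℂ) * μ i)) := by
  unfold leviForm
  refine Finset.sum_congr rfl fun p _ => ?_
  have h1 : ∀ i : Fin n, (p.1 i : ℂ) * mpow z (p.1 - Finsupp.single i 1) * (μ i * z i)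
      = (p.1 i : ℂ) * μ i * mpow z p.1 := by
    intro i
    linear_combination μ i * mpow_coeff_mul z p.1 i
  have h2 : ∀ j : Fin n, (p.2 j : ℂ) * mpow z (p.2 - Finsupp.single j 1) * (μ j * z j)
      = (p.2 j : ℂ) * μ j * mpow z p.2 := by
    intro j
    linear_combination μ j * mpow_coeff_mul z p.2 j
  have key : (∑ i, ∑ j, (p.1 i : ℂ) * (p.2 j : ℂ) * mpow z (p.1 - Finsupp.single i 1) *
      conj (mpow z (p.2 - Finsupp.single j 1)) * (μ i * z i) * conj (μ j * z j))
      = (∑ i, (p.1 i : ℂ) * mpow z (p.1 - Finsupp.single i 1) * (μ i * z i)) *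
        (∑ j, conj ((p.2 j : ℂ) * mpow z (p.2 - Finsupp.single j 1) * (μ j * z j))) := by
    rw [Finset.sum_mul_sum]
    refine Finset.sum_congr rfl fun i _ => Finset.sum_congr rfl fun j _ => ?_
    simp only [map_mul, map_natCast]
    ring
  calc a p * ∑ i, ∑ j, (p.1 i : ℂ) * (p.2 j : ℂ) * mpow z (p.1 - Finsupp.single i 1) *
        conj (mpow z (p.2 - Finsupp.single j 1)) * ((fun l => μ l * z l) i) *
          conj ((fun l => μ l * z l) j)
      = a p * ((∑ i, (p.1 i : ℂ) * μ i * mpow z p.1) *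
          conj (∑ j, (p.2 j : ℂ) * μ j * mpow z p.2)) := by
        rw [key]
        simp only [← map_sum]
        congr 2
        · exact Finset.sum_congr rfl fun i _ => h1 i
        · congr 1
          exact Finset.sum_congr rfl fun j _ => h2 j
    _ = a p * (mpow z p.1 * conj (mpow z p.2)) *
        ((∑ i, (p.1 i : ℂ) * μ i) * conj (∑ i, (p.2 i : ℂ) * μ i)) := by
        rw [← Finset.sum_mul, ← Finset.sum_mul, map_mul]
        ring


/-! ### Roots of unity machinery -/

def tN (d : Fin n → ℕ) : Fin n → ℕ := fun j => 4 * d j + 1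

lemma tN_ne (d : Fin n → ℕ) (j : Fin n) : tN d j ≠ 0 := by simp [tN]

noncomputable def tω (d : Fin n → ℕ) : Fin n → ℂ :=
  fun j => Complex.exp (2 * Real.pi * Complex.I / (tN d j : ℂ))

lemma tω_prim (d : Fin n → ℕ) (j : Fin n) : IsPrimitiveRoot (tω d j) (tN d j) :=
  Complex.isPrimitiveRoot_exp _ (tN_ne d j)

lemma tω_ne (d : Fin n → ℕ) (j : Fin n) : tω d j ≠ 0 := Complex.exp_ne_zero _

lemma tω_abs (d : Fin n → ℕ) (j : Fin n) : ‖tω d j‖ = 1 := by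
  have : 2 * Real.pi * Complex.I / (tN d j : ℂ)
      = ((2 * Real.pi / (tN d j : ℕ) : ℝ) : ℂ) * Complex.I := by
    push_cast; ring
  rw [tω, this, Complex.norm_exp_ofReal_mul_I]

noncomputable def te (d : Fin n → ℕ) (g : Fin n → ℤ) (t : (j : Fin n) → Fin (tN d j)) : ℂ :=
  ∏ j, tω d j ^ (g j * ((t j : ℕ) : ℤ))

lemma te_abs (d : Fin n → ℕ) (g : Fin n → ℤ) (t : (j : Fin n) → Fin (tN d j)) :
    ‖te d g t‖ = 1 := by
  rw [te, norm_prod]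
  refine Finset.prod_eq_one fun j _ => ?_
  rw [norm_zpow, tω_abs, one_zpow]

lemma te_conj (d : Fin n → ℕ) (g : Fin n → ℤ) (t : (j : Fin n) → Fin (tN d j)) :
    conj (te d g t) = te d (fun j => -(g j)) t := by
  rw [te, te, map_prod]
  refine Finset.prod_congr rfl fun j _ => ?_
  rw [map_zpow₀, ← Complex.inv_eq_conj (by rw [tω_abs]),
    inv_zpow, ← zpow_neg, neg_mul]

lemma te_mul (d : Fin n → ℕ) (g h : Fin n → ℤ) (t : (j : Fin n) → Fin (tN d j)) :
    te d g t * te d h t = te d (fun j => g j + h j) t := by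
  rw [te, te, te, ← Finset.prod_mul_distrib]
  refine Finset.prod_congr rfl fun j _ => ?_
  rw [← zpow_add₀ (tω_ne d j), add_mul]

lemma sum_zpow_eq_zero {N : ℕ} (hN : N ≠ 0) {ω : ℂ} (hω : IsPrimitiveRoot ω N)
    {g : ℤ} (hg : g ≠ 0) (hlt : |g| < (N : ℤ)) :
    ∑ x : Fin N, ω ^ (g * ((x : ℕ) : ℤ)) = 0 := by
  set y : ℂ := ω ^ g with hy
  have hy1 : y ≠ 1 := by
    intro h
    exact hg (Int.eq_zero_of_abs_lt_dvd ((hω.zpow_eq_one_iff_dvd g).mp h) hlt)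
  have hyN : y ^ N = 1 := by
    rw [hy, ← zpow_natCast (ω ^ g) N, ← zpow_mul, mul_comm, zpow_mul, zpow_natCast,
      hω.pow_eq_one, one_zpow]
  have h1 : ∑ x : Fin N, ω ^ (g * ((x : ℕ) : ℤ)) = ∑ i ∈ Finset.range N, y ^ i := by
    rw [← Fin.sum_univ_eq_sum_range (fun i => y ^ i) N]
    refine Finset.sum_congr rfl fun x _ => ?_
    rw [hy, ← zpow_natCast (ω ^ g) (x : ℕ), ← zpow_mul]
  rw [h1, geom_sum_eq hy1, hyN, sub_self, zero_div]

lemma te_sum (d : Fin n → ℕ) (g : Fin n → ℤ) (hlt : ∀ j, |g j| < (tN d j : ℤ)) :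
    ∑ t : (j : Fin n) → Fin (tN d j), te d g t
      = if ∀ j, g j = 0 then ((∏ j, tN d j : ℕ) : ℂ) else 0 := by
  unfold te
  rw [← Fintype.prod_sum (fun (j : Fin n) (x : Fin (tN d j)) => tω d j ^ (g j * ((x : ℕ) : ℤ)))]
  split_ifs with h
  · push_cast
    refine Finset.prod_congr rfl fun j _ => ?_
    simp [h j]
  · push_neg at h
    obtain ⟨j, hj⟩ := h
    exact Finset.prod_eq_zero (Finset.mem_univ j)
      (sum_zpow_eq_zero (tN_ne d j) (tω_prim d j) hj (hlt j))

noncomputable def tz (d : Fin n → ℕ) (t : (j : Fin n) → Fin (tN d j)) : Fin n → ℂ :=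
  fun j => tω d j ^ (t j : ℕ)

lemma tmpow (d : Fin n → ℕ) (t : (j : Fin n) → Fin (tN d j)) (α β : Fin n →₀ ℕ) :
    mpow (tz d t) α * conj (mpow (tz d t) β)
      = te d (fun j => (α j : ℤ) - (β j : ℤ)) t := by
  have hα : ∀ γ : Fin n →₀ ℕ, mpow (tz d t) γ = ∏ j, tω d j ^ (((γ j : ℤ)) * ((t j : ℕ) : ℤ)) := by
    intro γ
    rw [mpow]
    refine Finset.prod_congr rfl fun j _ => ?_
    rw [tz, ← pow_mul, ← zpow_natCast (tω d j) ((t j : ℕ) * γ j)]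
    congr 1
    push_cast
    ring
  rw [hα, hα, map_prod, ← Finset.prod_mul_distrib]
  refine Finset.prod_congr rfl fun j _ => ?_
  rw [map_zpow₀, ← Complex.inv_eq_conj (by rw [tω_abs]),
    inv_zpow, ← zpow_neg, ← zpow_add₀ (tω_ne d j)]
  congr 1
  ring


lemma gamma_inj {J : Finset ((Fin n →₀ ℕ) × (Fin n →₀ ℕ))} {d : Fin n → ℕ}
    (hsep : ∀ p ∈ J, ∀ j : Fin n, p.1 j + p.2 j = 2 * d j)
    {p q : (Fin n →₀ ℕ) × (Fin n →₀ ℕ)} (hp : p ∈ J) (hq : q ∈ J)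
    (h : ∀ j, (p.1 j : ℤ) - (p.2 j : ℤ) = (q.1 j : ℤ) - (q.2 j : ℤ)) : p = q := by
  have h1 : ∀ j, p.1 j = q.1 j ∧ p.2 j = q.2 j := by
    intro j
    have e1 := hsep p hp j
    have e2 := hsep q hq j
    have e3 := h j
    omega
  exact Prod.ext (Finsupp.ext fun j => (h1 j).1) (Finsupp.ext fun j => (h1 j).2)

lemma main_vanish {J : Finset ((Fin n →₀ ℕ) × (Fin n →₀ ℕ))}
    {a : (Fin n →₀ ℕ) × (Fin n →₀ ℕ) → ℂ} {d : Fin n → ℕ}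
    (hsep : ∀ p ∈ J, ∀ j : Fin n, p.1 j + p.2 j = 2 * d j)
    (hsym : ∀ p ∈ J, (p.2, p.1) ∈ J)
    (hherm : ∀ p : (Fin n →₀ ℕ) × (Fin n →₀ ℕ), a (p.2, p.1) = conj (a p))
    (hpsh : ∀ z V : Fin n → ℂ, 0 ≤ (leviForm J a z V).re)
    {p₀ : (Fin n →₀ ℕ) × (Fin n →₀ ℕ)} (hp₀ : p₀ ∈ J) (hne : p₀.1 ≠ p₀.2)
    (μ : Fin n → ℂ)
    (hμ0 : ∀ p ∈ J, p.1 = p.2 → ∑ i, (p.1 i : ℂ) * μ i = 0) :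
    a p₀ * ((∑ i, (p₀.1 i : ℂ) * μ i) * conj (∑ i, (p₀.2 i : ℂ) * μ i)) = 0 := by
  classical
  set A : (Fin n →₀ ℕ) → ℂ := fun α => ∑ i, (α i : ℂ) * μ i with hA
  set G : (Fin n →₀ ℕ) × (Fin n →₀ ℕ) → ℂ := fun p => a p * (A p.1 * conj (A p.2)) with hGdef
  show G p₀ = 0
  set γ : (Fin n →₀ ℕ) × (Fin n →₀ ℕ) → Fin n → ℤ :=
    fun p j => (p.1 j : ℤ) - (p.2 j : ℤ) with hγ
  set Ntot : ℕ := ∏ j, tN d j with hNtot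
  have hNtotpos : 0 < Ntot := Finset.prod_pos fun j _ => Nat.pos_of_ne_zero (tN_ne d j)
  have hlt2 : ∀ p ∈ J, ∀ j, |γ p j| ≤ 2 * (d j : ℤ) := by
    intro p hp j
    have := hsep p hp j
    rw [abs_le]
    constructor <;> simp only [hγ] <;> omega
  -- the Levi form at torus points
  have hL : ∀ t : (j : Fin n) → Fin (tN d j),
      leviForm J a (tz d t) (fun l => μ l * tz d t l) = ∑ p ∈ J, G p * te d (γ p) t := by
    intro t
    rw [leviForm_mu]
    refine Finset.sum_congr rfl fun p _ => ?_
    rw [← tmpow d t p.1 p.2]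
    simp only [hGdef, hA]
    ring
  -- key inequality for all u of modulus ≤ 1
  have key : ∀ u : ℂ, ‖u‖ ≤ 1 → 0 ≤ (u * G p₀).re := by
    intro u hu
    set w : ((j : Fin n) → Fin (tN d j)) → ℝ :=
      fun t => 1 + (u * conj (te d (γ p₀) t)).re with hw
    have hw0 : ∀ t, 0 ≤ w t := by
      intro t
      have h1 : |(u * conj (te d (γ p₀) t)).re| ≤ ‖u * conj (te d (γ p₀) t)‖ :=
        Complex.abs_re_le_norm _
      have h2 : ‖u * conj (te d (γ p₀) t)‖ ≤ 1 := by
        rw [norm_mul, Complex.norm_conj, te_abs, mul_one]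
        exact hu
      have := abs_le.mp (le_trans h1 h2)
      simp only [hw]
      linarith [this.1]
    have hwC : ∀ t, ((w t : ℝ) : ℂ)
        = 1 + (u * te d (fun j => -(γ p₀ j)) t + conj u * te d (γ p₀) t) / 2 := by
      intro t
      have h1 : (((u * conj (te d (γ p₀) t)).re : ℝ) : ℂ)
          = (u * conj (te d (γ p₀) t) + conj (u * conj (te d (γ p₀) t))) / 2 := by
        rw [Complex.add_conj]
        push_cast
        ring
      have h2 : conj (u * conj (te d (γ p₀) t)) = conj u * te d (γ p₀) t := by
        rw [map_mul, Complex.conj_conj]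
      have h3 : u * conj (te d (γ p₀) t) = u * te d (fun j => -(γ p₀ j)) t := by
        rw [te_conj]
      calc ((w t : ℝ) : ℂ)
          = 1 + (((u * conj (te d (γ p₀) t)).re : ℝ) : ℂ) := by
            simp only [hw]; push_cast; ring
        _ = 1 + (u * conj (te d (γ p₀) t) + conj (u * conj (te d (γ p₀) t))) / 2 := by
            rw [h1]
        _ = 1 + (u * te d (fun j => -(γ p₀ j)) t + conj u * te d (γ p₀) t) / 2 := by
            rw [h2, h3]
    -- positivity of the averaged Levi form
    have hpos : 0 ≤ (∑ t : (j : Fin n) → Fin (tN d j),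
        ((w t : ℝ) : ℂ) * leviForm J a (tz d t) (fun l => μ l * tz d t l)).re := by
      rw [Complex.re_sum]
      refine Finset.sum_nonneg fun t _ => ?_
      rw [Complex.re_ofReal_mul]
      exact mul_nonneg (hw0 t) (hpsh _ _)
    -- computing the averaged sum
    have hI : ∀ p ∈ J, ∑ t : (j : Fin n) → Fin (tN d j), ((w t : ℝ) : ℂ) * te d (γ p) t
        = (if ∀ j, γ p j = 0 then (Ntot : ℂ) else 0)
          + u / 2 * (if ∀ j, γ p j + -(γ p₀ j) = 0 then (Ntot : ℂ) else 0)
          + conj u / 2 * (if ∀ j, γ p j + γ p₀ j = 0 then (Ntot : ℂ) else 0) := by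
      intro p hp
      have expand : ∀ t, ((w t : ℝ) : ℂ) * te d (γ p) t
          = te d (γ p) t + u / 2 * te d (fun j => γ p j + -(γ p₀ j)) t
            + conj u / 2 * te d (fun j => γ p j + γ p₀ j) t := by
        intro t
        rw [hwC t]
        have m1 : te d (γ p) t * te d (fun j => -(γ p₀ j)) t
            = te d (fun j => γ p j + -(γ p₀ j)) t := te_mul d _ _ t
        have m2 : te d (γ p) t * te d (γ p₀) t
            = te d (fun j => γ p j + γ p₀ j) t := te_mul d _ _ t
        calc (1 + (u * te d (fun j => -(γ p₀ j)) t + conj u * te d (γ p₀) t) / 2) * te d (γ p) t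
            = te d (γ p) t + u / 2 * (te d (γ p) t * te d (fun j => -(γ p₀ j)) t)
              + conj u / 2 * (te d (γ p) t * te d (γ p₀) t) := by ring
          _ = _ := by rw [m1, m2]
      rw [Finset.sum_congr rfl fun t _ => expand t]
      rw [Finset.sum_add_distrib, Finset.sum_add_distrib, ← Finset.mul_sum, ← Finset.mul_sum]
      have b1 : ∀ j, |γ p j| < (tN d j : ℤ) := by
        intro j
        have := hlt2 p hp j
        have h4 : (tN d j : ℤ) = 4 * (d j : ℤ) + 1 := by simp only [tN]; push_cast; ring
        rw [abs_le] at this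
        rw [abs_lt]
        omega
      have b2 : ∀ j, |γ p j + -(γ p₀ j)| < (tN d j : ℤ) := by
        intro j
        have i1 := hlt2 p hp j
        have i2 := hlt2 p₀ hp₀ j
        have h4 : (tN d j : ℤ) = 4 * (d j : ℤ) + 1 := by simp only [tN]; push_cast; ring
        rw [abs_le] at i1 i2
        rw [abs_lt]
        omega
      have b3 : ∀ j, |γ p j + γ p₀ j| < (tN d j : ℤ) := by
        intro j
        have i1 := hlt2 p hp j
        have i2 := hlt2 p₀ hp₀ j
        rw [abs_le] at i1 i2
        have h4 : (tN d j : ℤ) = 4 * (d j : ℤ) + 1 := by simp only [tN]; push_cast; ring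
        rw [abs_lt]
        omega
      rw [te_sum d _ b1, te_sum d _ b2, te_sum d _ b3, hNtot]
    -- the three partial sums
    have S1 : ∑ p ∈ J, G p * (if ∀ j, γ p j = 0 then (Ntot : ℂ) else 0) = 0 := by
      refine Finset.sum_eq_zero fun p hp => ?_
      by_cases h : ∀ j, γ p j = 0
      · have hpp : p.1 = p.2 := by
          refine Finsupp.ext fun j => ?_
          have := h j
          simp only [hγ] at this
          omega
        have : A p.1 = 0 := hμ0 p hp hpp
        simp [hGdef, this]
      · rw [if_neg h, mul_zero]
    have S2 : ∑ p ∈ J, G p * (u / 2 * (if ∀ j, γ p j + -(γ p₀ j) = 0 then (Ntot : ℂ) else 0))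
        = G p₀ * (u / 2 * (Ntot : ℂ)) := by
      rw [Finset.sum_eq_single_of_mem p₀ hp₀]
      · rw [if_pos fun j => by ring]
      · intro p hp hpne
        rw [if_neg, mul_zero, mul_zero]
        intro h
        exact hpne (gamma_inj hsep hp hp₀ fun j => by have := h j; simp only [hγ] at *; omega)
    have S3 : ∑ p ∈ J, G p * (conj u / 2 * (if ∀ j, γ p j + γ p₀ j = 0 then (Ntot : ℂ) else 0))
        = conj (G p₀) * (conj u / 2 * (Ntot : ℂ)) := by
      have hp₀' : (p₀.2, p₀.1) ∈ J := hsym p₀ hp₀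
      have hGconj : G (p₀.2, p₀.1) = conj (G p₀) := by
        simp only [hGdef, hherm p₀, map_mul, Complex.conj_conj]
        ring
      rw [Finset.sum_eq_single_of_mem (p₀.2, p₀.1) hp₀']
      · rw [if_pos, hGconj]
        intro j
        simp only [hγ]
        ring
      · intro p hp hpne
        rw [if_neg, mul_zero, mul_zero]
        intro h
        refine hpne (gamma_inj hsep hp hp₀' fun j => ?_)
        have := h j
        simp only [hγ] at *
        omega
    -- assembling
    have hsum : (∑ t : (j : Fin n) → Fin (tN d j),
        ((w t : ℝ) : ℂ) * leviForm J a (tz d t) (fun l => μ l * tz d t l))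
        = (Ntot : ℂ) / 2 * (u * G p₀ + conj (u * G p₀)) := by
      calc ∑ t, ((w t : ℝ) : ℂ) * leviForm J a (tz d t) (fun l => μ l * tz d t l)
          = ∑ t, ∑ p ∈ J, ((w t : ℝ) : ℂ) * (G p * te d (γ p) t) := by
            refine Finset.sum_congr rfl fun t _ => ?_
            rw [hL t, Finset.mul_sum]
        _ = ∑ p ∈ J, ∑ t, ((w t : ℝ) : ℂ) * (G p * te d (γ p) t) := Finset.sum_comm
        _ = ∑ p ∈ J, G p * ∑ t, ((w t : ℝ) : ℂ) * te d (γ p) t := by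
            refine Finset.sum_congr rfl fun p _ => ?_
            rw [Finset.mul_sum]
            exact Finset.sum_congr rfl fun t _ => by ring
        _ = ∑ p ∈ J, G p * ((if ∀ j, γ p j = 0 then (Ntot : ℂ) else 0)
              + u / 2 * (if ∀ j, γ p j + -(γ p₀ j) = 0 then (Ntot : ℂ) else 0)
              + conj u / 2 * (if ∀ j, γ p j + γ p₀ j = 0 then (Ntot : ℂ) else 0)) :=
            Finset.sum_congr rfl fun p hp => by rw [hI p hp]
        _ = (∑ p ∈ J, G p * (if ∀ j, γ p j = 0 then (Ntot : ℂ) else 0))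
            + (∑ p ∈ J, G p * (u / 2 * (if ∀ j, γ p j + -(γ p₀ j) = 0 then (Ntot : ℂ) else 0)))
            + (∑ p ∈ J, G p * (conj u / 2 * (if ∀ j, γ p j + γ p₀ j = 0 then (Ntot : ℂ) else 0))) := by
            rw [← Finset.sum_add_distrib, ← Finset.sum_add_distrib]
            exact Finset.sum_congr rfl fun p _ => by ring
        _ = 0 + G p₀ * (u / 2 * (Ntot : ℂ)) + conj (G p₀) * (conj u / 2 * (Ntot : ℂ)) := by
            rw [S1, S2, S3]
        _ = (Ntot : ℂ) / 2 * (u * G p₀ + conj (u * G p₀)) := by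
            simp only [hGdef, map_mul, Complex.conj_conj]
            ring
    rw [hsum] at hpos
    have hre : ((Ntot : ℂ) / 2 * (u * G p₀ + conj (u * G p₀))).re
        = (Ntot : ℝ) * (u * G p₀).re := by
      rw [Complex.add_conj]
      have : (Ntot : ℂ) / 2 * ((2 * (u * G p₀).re : ℝ) : ℂ)
          = (((Ntot : ℝ) * (u * G p₀).re : ℝ) : ℂ) := by
        push_cast
        ring
      rw [this, Complex.ofReal_re]
    rw [hre] at hpos
    have hN' : (0 : ℝ) < (Ntot : ℝ) := by exact_mod_cast hNtotpos
    nlinarith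
  -- conclude
  by_contra hG0
  set g : ℂ := G p₀ with hg
  have hag : 0 < ‖g‖ := by
    rw [norm_pos_iff]
    exact hG0
  set u : ℂ := -conj g / (‖g‖ : ℂ) with hu
  have habsu : ‖u‖ ≤ 1 := by
    rw [hu, norm_div, norm_neg, Complex.norm_conj, Complex.norm_real, Real.norm_eq_abs,
      abs_of_pos hag, div_self (ne_of_gt hag)]
  have hX : u * g = ((-(Complex.normSq g / ‖g‖) : ℝ) : ℂ) := by
    have h1 : conj g * g = (Complex.normSq g : ℂ) := by
      rw [mul_comm, Complex.mul_conj]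
    calc u * g = -(conj g * g) / ((‖g‖ : ℝ) : ℂ) := by rw [hu]; ring
      _ = -((Complex.normSq g : ℝ) : ℂ) / ((‖g‖ : ℝ) : ℂ) := by rw [h1]
      _ = ((-(Complex.normSq g / ‖g‖) : ℝ) : ℂ) := by push_cast; ring
  have := key u habsu
  rw [hX, Complex.ofReal_re] at this
  have hns : 0 < Complex.normSq g := Complex.normSq_pos.mpr hG0
  have : Complex.normSq g / ‖g‖ ≤ 0 := by linarith
  have : 0 < Complex.normSq g / ‖g‖ := div_pos hns hag
  linarith


lemma mpow_pow (z : Fin n → ℂ) (α : Fin n →₀ ℕ) (m : Fin n → ℕ) (k : ℕ)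
    (h : ∀ j, α j = k * m j) : mpow z α = (∏ j, z j ^ m j) ^ k := by
  rw [mpow, ← Finset.prod_pow]
  exact Finset.prod_congr rfl fun j _ => by rw [h j, ← pow_mul, mul_comm]

end Stmt12

open Stmt12

/-- let `P : ℂⁿ → ℝ` (`n ≥ 2`) be a non-constant homogeneous
plurisubharmonic polynomial without pluriharmonic terms, homogeneous of degree `2d_j > 0`
in `(z_j, z̄_j)` for every `j`, and let `d = gcd(d_1,…,d_n)`.  Then there is a homogeneous
subharmonic polynomial `s : ℂ → ℝ` without harmonic terms such that
`P(z) = s(z_1^{d_1/d} ⋯ z_n^{d_n/d})`. -/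
theorem stmt12 {n : ℕ} (hn : 2 ≤ n)
    (J : Finset ((Fin n →₀ ℕ) × (Fin n →₀ ℕ)))
    (a : (Fin n →₀ ℕ) × (Fin n →₀ ℕ) → ℂ)
    (d : Fin n → ℕ) (hd : ∀ j, 0 < d j)
    (hsep : ∀ p ∈ J, ∀ j : Fin n, p.1 j + p.2 j = 2 * d j)
    (hnp : ∀ p ∈ J, p.1 ≠ 0 ∧ p.2 ≠ 0)
    (hsym : ∀ p ∈ J, (p.2, p.1) ∈ J)
    (hherm : ∀ p : (Fin n →₀ ℕ) × (Fin n →₀ ℕ), a (p.2, p.1) = conj (a p))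
    (hpsh : ∀ z V : Fin n → ℂ, 0 ≤ (leviForm J a z V).re)
    (hnc : ∃ z w : Fin n → ℂ, pval J a z ≠ pval J a w)
    (dG : ℕ) (hdG : dG = Finset.univ.gcd d) :
    ∃ (S : Finset (ℕ × ℕ)) (c : ℕ × ℕ → ℂ) (ds : ℕ),
      (∀ p ∈ S, 1 ≤ p.1 ∧ 1 ≤ p.2 ∧ p.1 + p.2 = ds) ∧
      (∀ τ : ℂ, (∑ p ∈ S, c p * τ ^ p.1 * conj τ ^ p.2).im = 0) ∧
      (∀ τ : ℂ,
        0 ≤ (∑ p ∈ S, c p * (p.1 : ℂ) * (p.2 : ℂ) * τ ^ (p.1 - 1) * conj τ ^ (p.2 - 1)).re) ∧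
      ∀ z : Fin n → ℂ, pval J a z =
        ∑ p ∈ S, c p * (∏ j, z j ^ (d j / dG)) ^ p.1 * conj (∏ j, z j ^ (d j / dG)) ^ p.2 := by
  classical
  have hj0 : 0 < n := by omega
  set j₀ : Fin n := ⟨0, hj0⟩ with hj₀
  have hdvdG : ∀ j, dG ∣ d j := fun j => hdG ▸ Finset.gcd_dvd (Finset.mem_univ j)
  have hdGpos : 0 < dG := by
    rcases Nat.eq_zero_or_pos dG with h | h
    · exfalso
      have h0 : Finset.univ.gcd d = 0 := by rw [← hdG, h]
      have h1 := Finset.gcd_eq_zero_iff.mp h0 j₀ (Finset.mem_univ j₀)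
      have := hd j₀
      omega
    · exact h
  set m : Fin n → ℕ := fun j => d j / dG with hm_def
  have hm : ∀ j, dG * m j = d j := fun j => Nat.mul_div_cancel' (hdvdG j)
  have hmpos : ∀ j, 0 < m j := by
    intro j
    rcases Nat.eq_zero_or_pos (m j) with h | h
    · exfalso; have h1 := hm j; rw [h, mul_zero] at h1; have := hd j; omega
    · exact h
  have hgcdm : Finset.univ.gcd m = 1 := by
    have h1 : Finset.univ.gcd (fun j => dG * m j) = dG := by
      rw [Finset.gcd_congr rfl fun j _ => hm j, ← hdG]
    rw [Finset.gcd_mul_left] at h1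
    have h2 : normalize dG = dG := normalize_eq dG
    rw [h2] at h1
    have := hdGpos
    rcases Nat.eq_zero_or_pos (Finset.univ.gcd m) with h3 | h3
    · rw [h3, mul_zero] at h1; omega
    · nlinarith [h1]
  -- Step A : proportionality of exponents
  have hkey : ∀ p ∈ J, a p ≠ 0 → ∀ j k : Fin n, p.1 j * d k = p.1 k * d j := by
    intro p hp ha j k
    by_cases hpp : p.1 = p.2
    · have h1 : ∀ l, p.1 l = d l := by
        intro l
        have e1 := hsep p hp l
        have e2 : p.1 l = p.2 l := by rw [hpp]
        omega
      rw [h1 j, h1 k, mul_comm]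
    · set μ : Fin n → ℂ :=
        fun i => (if i = j then (d k : ℂ) else 0) - (if i = k then (d j : ℂ) else 0) with hμ
      have hsum : ∀ x : Fin n → ℕ, ∑ i, (x i : ℂ) * μ i
          = (x j : ℂ) * (d k : ℂ) - (x k : ℂ) * (d j : ℂ) := by
        intro x
        simp only [hμ, mul_sub, mul_ite, mul_zero]
        rw [Finset.sum_sub_distrib, Finset.sum_ite_eq' Finset.univ j
          (fun i => (x i : ℂ) * (d k : ℂ)), Finset.sum_ite_eq' Finset.univ k
          (fun i => (x i : ℂ) * (d j : ℂ))]
        simp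
      have hμ0 : ∀ q ∈ J, q.1 = q.2 → ∑ i, (q.1 i : ℂ) * μ i = 0 := by
        intro q hq hqq
        have h1 : ∀ l, (q.1) l = d l := by
          intro l
          have e1 := hsep q hq l
          have e2 : q.1 l = q.2 l := by rw [hqq]
          omega
        rw [hsum (fun l => q.1 l), h1 j, h1 k]
        ring
      have hv := main_vanish hsep hsym hherm hpsh hp hpp μ hμ0
      rw [hsum (fun l => p.1 l), hsum (fun l => p.2 l)] at hv
      have hβ : ((p.2 j : ℂ) * (d k : ℂ) - (p.2 k : ℂ) * (d j : ℂ))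
          = -((p.1 j : ℂ) * (d k : ℂ) - (p.1 k : ℂ) * (d j : ℂ)) := by
        have e1 := hsep p hp j
        have e2 := hsep p hp k
        have f1 : (p.1 j : ℂ) + (p.2 j : ℂ) = 2 * (d j : ℂ) := by exact_mod_cast e1
        have f2 : (p.1 k : ℂ) + (p.2 k : ℂ) = 2 * (d k : ℂ) := by exact_mod_cast e2
        linear_combination (d k : ℂ) * f1 - (d j : ℂ) * f2
      rw [hβ] at hv
      have hconjA : conj (-((p.1 j : ℂ) * (d k : ℂ) - (p.1 k : ℂ) * (d j : ℂ)))
          = -((p.1 j : ℂ) * (d k : ℂ) - (p.1 k : ℂ) * (d j : ℂ)) := by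
        simp only [map_neg, map_sub, map_mul, map_natCast]
      rw [hconjA] at hv
      have hA2 : ((p.1 j : ℂ) * (d k : ℂ) - (p.1 k : ℂ) * (d j : ℂ)) = 0 := by
        rcases mul_eq_zero.mp hv with h | h
        · exact absurd h ha
        · rcases mul_eq_zero.mp h with h1 | h1
          · exact h1
          · exact neg_eq_zero.mp h1
      have hfin : (p.1 j : ℂ) * (d k : ℂ) = (p.1 k : ℂ) * (d j : ℂ) := by
        linear_combination hA2
      exact_mod_cast hfin
  -- Step A' : structure of exponents
  have hstruct : ∀ p ∈ J, a p ≠ 0 → (1 ≤ p.1 j₀ / m j₀ ∧ (p.1 j₀ / m j₀) + 1 ≤ 2 * dG ∧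
      (∀ j, p.1 j = (p.1 j₀ / m j₀) * m j) ∧ (∀ j, p.2 j = (2 * dG - p.1 j₀ / m j₀) * m j)) := by
    intro p hp ha
    have hprop := hkey p hp ha
    have hpropm : ∀ j k : Fin n, p.1 j * m k = p.1 k * m j := by
      intro j k
      apply Nat.eq_of_mul_eq_mul_left hdGpos
      calc dG * (p.1 j * m k) = p.1 j * (dG * m k) := by ring
        _ = p.1 j * d k := by rw [hm]
        _ = p.1 k * d j := hprop j k
        _ = p.1 k * (dG * m j) := by rw [hm]
        _ = dG * (p.1 k * m j) := by ring
    have hdvd : ∀ j, m j ∣ p.1 j := by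
      intro j
      have h1 : m j ∣ Finset.univ.gcd (fun k => p.1 j * m k) := by
        refine Finset.dvd_gcd fun k _ => ?_
        rw [hpropm j k]
        exact dvd_mul_left _ _
      rwa [Finset.gcd_mul_left, hgcdm, mul_one, normalize_eq] at h1
    set k : ℕ := p.1 j₀ / m j₀ with hk_def
    have hkmj : k * m j₀ = p.1 j₀ := Nat.div_mul_cancel (hdvd j₀)
    have hkj : ∀ j, p.1 j = k * m j := by
      intro j
      apply Nat.eq_of_mul_eq_mul_right (hmpos j₀)
      calc p.1 j * m j₀ = p.1 j₀ * m j := hpropm j j₀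
        _ = (k * m j₀) * m j := by rw [hkmj]
        _ = (k * m j) * m j₀ := by ring
    have hk2 : k ≤ 2 * dG := by
      have h1 : p.1 j₀ ≤ 2 * d j₀ := by have := hsep p hp j₀; omega
      have h2 : k * m j₀ ≤ (2 * dG) * m j₀ := by
        rw [hkmj]
        calc p.1 j₀ ≤ 2 * d j₀ := h1
          _ = 2 * (dG * m j₀) := by rw [hm]
          _ = (2 * dG) * m j₀ := by ring
      exact Nat.le_of_mul_le_mul_right h2 (hmpos j₀)
    have hβj : ∀ j, p.2 j = (2 * dG - k) * m j := by
      intro j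
      have e := hsep p hp j
      have h1 : 2 * d j = (2 * dG) * m j := by rw [← hm j]; ring
      have h2 : (2 * dG - k) * m j = (2 * dG) * m j - k * m j := Nat.sub_mul _ _ _
      have h3 := hkj j
      omega
    have hk1 : 1 ≤ k := by
      by_contra h
      have hk0 : k = 0 := Nat.eq_zero_of_not_pos h
      have hzero : p.1 = 0 := by
        refine Finsupp.ext fun j => ?_
        rw [hkj j, hk0, zero_mul]
        rfl
      exact (hnp p hp).1 hzero
    have hklt : k + 1 ≤ 2 * dG := by
      rcases Nat.lt_or_ge k (2 * dG) with h | h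
      · omega
      · exfalso
        have hk0 : k = 2 * dG := le_antisymm hk2 h
        have hzero : p.2 = 0 := by
          refine Finsupp.ext fun j => ?_
          rw [hβj j, hk0, Nat.sub_self, zero_mul]
          rfl
        exact (hnp p hp).2 hzero
    exact ⟨hk1, hklt, hkj, hβj⟩
  -- Step B : construction of s
  set Jg : Finset ((Fin n →₀ ℕ) × (Fin n →₀ ℕ)) := J.filter (fun p => a p ≠ 0) with hJg
  set κ : (Fin n →₀ ℕ) × (Fin n →₀ ℕ) → ℕ := fun p => p.1 j₀ / m j₀ with hκ
  have hκval : ∀ p ∈ Jg, 1 ≤ κ p ∧ κ p + 1 ≤ 2 * dG ∧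
      (∀ j, p.1 j = κ p * m j) ∧ (∀ j, p.2 j = (2 * dG - κ p) * m j) := by
    intro p hpg
    obtain ⟨hpJ, ha⟩ := Finset.mem_filter.mp hpg
    exact hstruct p hpJ ha
  set F : ℕ → (Fin n →₀ ℕ) := fun q => Finsupp.equivFunOnFinite.symm (fun j => q * m j) with hF
  have hFval : ∀ q j, F q j = q * m j := fun q j => rfl
  have hpF : ∀ p ∈ Jg, p = (F (κ p), F (2 * dG - κ p)) := by
    intro p hpg
    obtain ⟨_, _, h3, h4⟩ := hκval p hpg
    exact Prod.ext (Finsupp.ext fun j => by rw [h3 j, hFval])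
      (Finsupp.ext fun j => by rw [h4 j, hFval])
  set S : Finset (ℕ × ℕ) := Jg.image (fun p => (κ p, 2 * dG - κ p)) with hS
  set c : ℕ × ℕ → ℂ := fun q => a (F q.1, F q.2) with hc
  have hcval : ∀ p ∈ Jg, c (κ p, 2 * dG - κ p) = a p := by
    intro p hpg
    show a (F (κ p), F (2 * dG - κ p)) = a p
    rw [← hpF p hpg]
  have hcconj : ∀ q : ℕ × ℕ, c (q.2, q.1) = conj (c q) := by
    intro q
    show a (F q.2, F q.1) = conj (a (F q.1, F q.2))
    exact hherm (F q.1, F q.2)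
  have hSfact : ∀ q ∈ S, 1 ≤ q.1 ∧ 1 ≤ q.2 ∧ q.1 + q.2 = 2 * dG := by
    intro q hq
    obtain ⟨p, hpg, hpq⟩ := Finset.mem_image.mp hq
    obtain ⟨h1, h2, _, _⟩ := hκval p hpg
    rw [← hpq]
    exact ⟨h1, by omega, by omega⟩
  have hSswap : ∀ q ∈ S, (q.2, q.1) ∈ S := by
    intro q hq
    obtain ⟨p, hpg, hpq⟩ := Finset.mem_image.mp hq
    obtain ⟨h1, h2, h3, h4⟩ := hκval p hpg
    obtain ⟨hpJ, ha⟩ := Finset.mem_filter.mp hpg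
    have hp' : (p.2, p.1) ∈ Jg := by
      rw [hJg, Finset.mem_filter]
      refine ⟨hsym p hpJ, ?_⟩
      rw [hherm p]
      simpa using ha
    have hκp' : κ (p.2, p.1) = 2 * dG - κ p := by
      show p.2 j₀ / m j₀ = 2 * dG - κ p
      rw [h4 j₀, Nat.mul_div_cancel _ (hmpos j₀)]
    refine Finset.mem_image.mpr ⟨(p.2, p.1), hp', ?_⟩
    rw [hκp', ← hpq]
    have : 2 * dG - (2 * dG - κ p) = κ p := by omega
    rw [this]
  have hinj : ∀ p ∈ Jg, ∀ p' ∈ Jg,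
      (κ p, 2 * dG - κ p) = (κ p', 2 * dG - κ p') → p = p' := by
    intro p hpg p' hpg' h
    have h1 : κ p = κ p' := (Prod.mk.injEq _ _ _ _).mp h |>.1
    rw [hpF p hpg, hpF p' hpg', h1]
  refine ⟨S, c, 2 * dG, hSfact, ?_, ?_, ?_⟩
  · -- reality
    intro τ
    rw [← Complex.conj_eq_iff_im, map_sum]
    refine Finset.sum_nbij' (fun q => (q.2, q.1)) (fun q => (q.2, q.1)) hSswap hSswap
      (fun q _ => rfl) (fun q _ => rfl) ?_
    intro q hq
    show conj (c q * τ ^ q.1 * conj τ ^ q.2) = c (q.2, q.1) * τ ^ q.2 * conj τ ^ q.1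
    rw [hcconj q, map_mul, map_mul, map_pow, map_pow, Complex.conj_conj]
    ring
  · -- subharmonicity
    have hpos1 : ∀ τ : ℂ, τ ≠ 0 →
        0 ≤ (∑ q ∈ S, c q * (q.1 : ℂ) * (q.2 : ℂ) * τ ^ (q.1 - 1) * conj τ ^ (q.2 - 1)).re := by
      intro τ hτ
      have hsmpos : 0 < ∑ j, m j :=
        Finset.sum_pos (fun j _ => hmpos j) ⟨j₀, Finset.mem_univ _⟩
      obtain ⟨ww, hww⟩ := Complex.isAlgClosed.exists_pow_nat_eq τ hsmpos
      set z : Fin n → ℂ := fun _ => ww with hz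
      have hZ : ∏ j, z j ^ m j = τ := by
        rw [Finset.prod_pow_eq_pow_sum]
        exact hww
      have h0 := hpsh z (fun l => (fun _ => (1 : ℂ)) l * z l)
      rw [leviForm_mu] at h0
      have hcomp : (∑ p ∈ J, a p * (mpow z p.1 * conj (mpow z p.2)) *
            ((∑ i, (p.1 i : ℂ) * 1) * conj (∑ i, (p.2 i : ℂ) * 1)))
          = ((((∑ j, m j : ℕ) : ℝ) ^ 2 * Complex.normSq τ : ℝ) : ℂ) *
            ∑ q ∈ S, c q * (q.1 : ℂ) * (q.2 : ℂ) * τ ^ (q.1 - 1) * conj τ ^ (q.2 - 1) := by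
        have hCast : ((((∑ j, m j : ℕ) : ℝ) ^ 2 * Complex.normSq τ : ℝ) : ℂ)
            = ((∑ j, m j : ℕ) : ℂ) ^ 2 * (τ * conj τ) := by
          rw [Complex.mul_conj]
          push_cast
          ring
        calc (∑ p ∈ J, a p * (mpow z p.1 * conj (mpow z p.2)) *
              ((∑ i, (p.1 i : ℂ) * 1) * conj (∑ i, (p.2 i : ℂ) * 1)))
            = ∑ p ∈ Jg, a p * (mpow z p.1 * conj (mpow z p.2)) *
              ((∑ i, (p.1 i : ℂ) * 1) * conj (∑ i, (p.2 i : ℂ) * 1)) := by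
              refine (Finset.sum_subset (Finset.filter_subset _ _) ?_).symm
              intro p hpJ hpg
              have ha : a p = 0 := by
                by_contra ha
                exact hpg (Finset.mem_filter.mpr ⟨hpJ, ha⟩)
              rw [ha]
              ring
          _ = ∑ p ∈ Jg, ((((∑ j, m j : ℕ) : ℝ) ^ 2 * Complex.normSq τ : ℝ) : ℂ) *
              (c (κ p, 2 * dG - κ p) * ((κ p : ℕ) : ℂ) * ((2 * dG - κ p : ℕ) : ℂ) *
                τ ^ (κ p - 1) * conj τ ^ (2 * dG - κ p - 1)) := by
              refine Finset.sum_congr rfl fun p hpg => ?_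
              obtain ⟨h1, h2, h3, h4⟩ := hκval p hpg
              have e1 : mpow z p.1 = τ ^ κ p := by rw [mpow_pow z p.1 m (κ p) h3, hZ]
              have e2 : mpow z p.2 = τ ^ (2 * dG - κ p) := by
                rw [mpow_pow z p.2 m (2 * dG - κ p) h4, hZ]
              have e3 : (∑ i, (p.1 i : ℂ) * 1) = ((κ p * ∑ j, m j : ℕ) : ℂ) := by
                push_cast
                rw [Finset.mul_sum]
                refine Finset.sum_congr rfl fun i _ => ?_
                rw [h3 i]
                push_cast
                ring
              have e4 : (∑ i, (p.2 i : ℂ) * 1) = (((2 * dG - κ p) * ∑ j, m j : ℕ) : ℂ) := by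
                push_cast [h4]
                rw [Finset.mul_sum]
                exact Finset.sum_congr rfl fun i _ => by ring
              have e5 : τ ^ κ p = τ * τ ^ (κ p - 1) := by
                conv_lhs => rw [show κ p = 1 + (κ p - 1) by omega]
                rw [pow_add, pow_one]
              have e6 : conj τ ^ (2 * dG - κ p) = conj τ * conj τ ^ (2 * dG - κ p - 1) := by
                conv_lhs => rw [show 2 * dG - κ p = 1 + (2 * dG - κ p - 1) by omega]
                rw [pow_add, pow_one]
              rw [e1, e2, e3, e4, hcval p hpg, hCast, map_pow, e5, e6, map_natCast]
              push_cast
              ring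
          _ = ((((∑ j, m j : ℕ) : ℝ) ^ 2 * Complex.normSq τ : ℝ) : ℂ) *
              ∑ p ∈ Jg, (c (κ p, 2 * dG - κ p) * ((κ p : ℕ) : ℂ) * ((2 * dG - κ p : ℕ) : ℂ) *
                τ ^ (κ p - 1) * conj τ ^ (2 * dG - κ p - 1)) := by
              rw [Finset.mul_sum]
          _ = ((((∑ j, m j : ℕ) : ℝ) ^ 2 * Complex.normSq τ : ℝ) : ℂ) *
              ∑ q ∈ S, c q * (q.1 : ℂ) * (q.2 : ℂ) * τ ^ (q.1 - 1) * conj τ ^ (q.2 - 1) := by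
              congr 1
              exact (Finset.sum_image (f := fun q : ℕ × ℕ => c q * (q.1 : ℂ) * (q.2 : ℂ) *
                τ ^ (q.1 - 1) * conj τ ^ (q.2 - 1)) hinj).symm
      rw [hcomp, Complex.re_ofReal_mul] at h0
      have hC : 0 < ((∑ j, m j : ℕ) : ℝ) ^ 2 * Complex.normSq τ := by
        have h1 : 0 < Complex.normSq τ := Complex.normSq_pos.mpr hτ
        have h2 : (0 : ℝ) < ((∑ j, m j : ℕ) : ℝ) := by exact_mod_cast hsmpos
        positivity
      nlinarith [h0, hC]
    intro τ
    rcases eq_or_ne τ 0 with rfl | hτ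
    · rcases Nat.lt_or_ge dG 2 with hdg | hdg
      · -- dG = 1
        have hdg1 : dG = 1 := by omega
        have hconst : (∑ q ∈ S, c q * (q.1 : ℂ) * (q.2 : ℂ) * (0 : ℂ) ^ (q.1 - 1) *
              conj (0 : ℂ) ^ (q.2 - 1))
            = ∑ q ∈ S, c q * (q.1 : ℂ) * (q.2 : ℂ) * (1 : ℂ) ^ (q.1 - 1) *
              conj (1 : ℂ) ^ (q.2 - 1) := by
          refine Finset.sum_congr rfl fun q hq => ?_
          obtain ⟨h1, h2, h3⟩ := hSfact q hq
          have hq1 : q.1 = 1 := by omega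
          have hq2 : q.2 = 1 := by omega
          rw [hq1, hq2]
          norm_num
        rw [hconst]
        exact hpos1 1 one_ne_zero
      · -- dG ≥ 2
        have hzero : (∑ q ∈ S, c q * (q.1 : ℂ) * (q.2 : ℂ) * (0 : ℂ) ^ (q.1 - 1) *
            conj (0 : ℂ) ^ (q.2 - 1)) = 0 := by
          refine Finset.sum_eq_zero fun q hq => ?_
          obtain ⟨h1, h2, h3⟩ := hSfact q hq
          rcases Nat.lt_or_ge 1 q.1 with hq1 | hq1
          · rw [zero_pow (by omega : q.1 - 1 ≠ 0)]
            ring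
          · have hq2 : 2 ≤ q.2 := by omega
            rw [map_zero, zero_pow (by omega : q.2 - 1 ≠ 0)]
            ring
        rw [hzero]
        norm_num
    · exact hpos1 τ hτ
  · -- representation
    intro z
    calc pval J a z
        = ∑ p ∈ Jg, a p * mpow z p.1 * conj (mpow z p.2) := by
          rw [pval]
          refine (Finset.sum_subset (Finset.filter_subset _ _) ?_).symm
          intro p hpJ hpg
          have ha : a p = 0 := by
            by_contra ha
            exact hpg (Finset.mem_filter.mpr ⟨hpJ, ha⟩)
          rw [ha]
          ring
      _ = ∑ p ∈ Jg, c (κ p, 2 * dG - κ p) * (∏ j, z j ^ m j) ^ κ p *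
            conj (∏ j, z j ^ m j) ^ (2 * dG - κ p) := by
          refine Finset.sum_congr rfl fun p hpg => ?_
          obtain ⟨h1, h2, h3, h4⟩ := hκval p hpg
          rw [hcval p hpg, mpow_pow z p.1 m (κ p) h3,
            mpow_pow z p.2 m (2 * dG - κ p) h4, map_pow]
      _ = ∑ q ∈ S, c q * (∏ j, z j ^ m j) ^ q.1 * conj (∏ j, z j ^ m j) ^ q.2 :=
          (Finset.sum_image (f := fun q : ℕ × ℕ => c q * (∏ j, z j ^ m j) ^ q.1 *
            conj (∏ j, z j ^ m j) ^ q.2) hinj).symm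
end
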